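/- arXiv:1904.06068 — 3 statements merged into one kernel-verified Lean document; each statement's English description precedes it below -/
import Mathlib

section
/- Let y ∈ L¹(0,1) with decreasing rearrangement λ(y), and let x ∈ Ω(y). Suppose there exist 0 < s₁ < s₂ < s₃ < s₄ < 1 with λ(s_{i+1}; x) < λ(s_i; x) for i = 1, 2, 3, and ∫₀^{s₁} λ(t; x) dt + λ(s₁; x)(s − s₁) ≤ ∫₀ˢ λ(t; y) dt for all s ∈ [s₁, s₄]. Then x is not an extreme point of Ω(y). -/
open MeasureTheory Set

/-- The decreasing rearrangement (spectral scale) of `f` on `(0,1)`. -/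
noncomputable def rr (f : ℝ → ℝ) (t : ℝ) : ℝ :=
  sInf {s : ℝ | volume {u ∈ Ioo (0:ℝ) 1 | s < f u} ≤ ENNReal.ofReal t}

/-- Hardy–Littlewood–Pólya majorisation `g ≺ f` on `(0,1)`. -/
def Maj (g f : ℝ → ℝ) : Prop :=
  (∀ s ∈ Ico (0:ℝ) 1, (∫ t in Ioo (0:ℝ) s, rr g t) ≤ ∫ t in Ioo (0:ℝ) s, rr f t) ∧
    (∫ t in Ioo (0:ℝ) 1, rr g t) = ∫ t in Ioo (0:ℝ) 1, rr f t

/-- The orbit `Ω(y)` of all integrable functions on `(0,1)` majorised by `y`. -/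
def Omega (y : ℝ → ℝ) : Set (ℝ → ℝ) :=
  {x | IntegrableOn x (Ioo (0:ℝ) 1) ∧ Maj x y}

/-- `x` is an extreme point of the convex set `Ω` (functions identified a.e. on `(0,1)`). -/
def ExtremePt (Ω : Set (ℝ → ℝ)) (x : ℝ → ℝ) : Prop :=
  x ∈ Ω ∧ ∀ x₁ ∈ Ω, ∀ x₂ ∈ Ω,
    (∀ᵐ u ∂(volume.restrict (Ioo (0:ℝ) 1)), x u = (x₁ u + x₂ u) / 2) →
    (∀ᵐ u ∂(volume.restrict (Ioo (0:ℝ) 1)), x₁ u = x₂ u)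

open ENNReal

namespace RRAux

/-- distribution function -/
noncomputable def dd (f : ℝ → ℝ) (c : ℝ) : ℝ≥0∞ :=
  volume {u ∈ Ioo (0:ℝ) 1 | c < f u}

/-- the defining set -/
def SS (f : ℝ → ℝ) (t : ℝ) : Set ℝ := {c : ℝ | dd f c ≤ ENNReal.ofReal t}

lemma mem_SS {f : ℝ → ℝ} {t c : ℝ} : c ∈ SS f t ↔ dd f c ≤ ENNReal.ofReal t := Iff.rfl

lemma rr_eq (f : ℝ → ℝ) (t : ℝ) : rr f t = sInf (SS f t) := rfl

lemma dd_antitone (f : ℝ → ℝ) : Antitone (dd f) := fun c c' h =>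
  measure_mono (fun u hu => ⟨hu.1, lt_of_le_of_lt h hu.2⟩)

lemma dd_le_one (f : ℝ → ℝ) (c : ℝ) : dd f c ≤ 1 := by
  have : dd f c ≤ volume (Ioo (0:ℝ) 1) := measure_mono (fun u hu => hu.1)
  simpa [Real.volume_Ioo] using this

lemma dd_ne_top (f : ℝ → ℝ) (c : ℝ) : dd f c ≠ ⊤ :=
  ne_top_of_le_ne_top ENNReal.one_ne_top (dd_le_one f c)

lemma SS_upward {f : ℝ → ℝ} {t c c' : ℝ} (h : c ∈ SS f t) (hcc : c ≤ c') : c' ∈ SS f t :=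
  le_trans (dd_antitone f hcc) h

lemma SS_mono (f : ℝ → ℝ) {t t' : ℝ} (h : t ≤ t') : SS f t ⊆ SS f t' :=
  fun _ hc => le_trans hc (ENNReal.ofReal_le_ofReal h)

lemma SS_nonempty {f : ℝ → ℝ} (hf : Measurable f)
    {t : ℝ} (ht : 0 < t) : (SS f t).Nonempty := by
  have hmeas : ∀ n : ℕ, NullMeasurableSet {u ∈ Ioo (0:ℝ) 1 | (n:ℝ) < f u} volume :=
    fun n => (measurableSet_Ioo.inter (hf measurableSet_Ioi)).nullMeasurableSet
  have hanti : Antitone (fun n : ℕ => {u ∈ Ioo (0:ℝ) 1 | (n:ℝ) < f u}) := by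
    intro n m h u hu
    exact ⟨hu.1, lt_of_le_of_lt (by exact_mod_cast h) hu.2⟩
  have hiInter : ⋂ n : ℕ, {u ∈ Ioo (0:ℝ) 1 | (n:ℝ) < f u} = ∅ := by
    ext u
    simp only [mem_iInter, mem_empty_iff_false, iff_false, not_forall]
    obtain ⟨n, hn⟩ := exists_nat_gt (f u)
    exact ⟨n, fun h => absurd h.2 (not_lt.mpr hn.le)⟩
  have htend := tendsto_measure_iInter_atTop hmeas hanti ⟨0, dd_ne_top f ((0:ℕ):ℝ)⟩
  rw [hiInter] at htend
  simp only [measure_empty] at htend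
  have hpos : (0:ℝ≥0∞) < ENNReal.ofReal t := by simpa using ht
  obtain ⟨n, hn⟩ := (htend.eventually_lt_const hpos).exists
  exact ⟨n, le_of_lt hn⟩

lemma SS_bddBelow {f : ℝ → ℝ} {t : ℝ} (ht : t < 1) : BddBelow (SS f t) := by
  have hmono : Monotone (fun n : ℕ => {u ∈ Ioo (0:ℝ) 1 | (-(n:ℝ)) < f u}) := by
    intro n m h u hu
    refine ⟨hu.1, lt_of_le_of_lt ?_ hu.2⟩
    simp only [neg_le_neg_iff]
    exact_mod_cast h
  have hiUnion : ⋃ n : ℕ, {u ∈ Ioo (0:ℝ) 1 | (-(n:ℝ)) < f u} = Ioo (0:ℝ) 1 := by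
    ext u
    simp only [mem_iUnion, mem_setOf_eq]
    constructor
    · rintro ⟨n, hn, _⟩; exact hn
    · intro hu
      obtain ⟨n, hn⟩ := exists_nat_gt (-(f u))
      exact ⟨n, hu, by linarith⟩
  have htend := tendsto_measure_iUnion_atTop (μ := volume) hmono
  rw [hiUnion] at htend
  have h1 : ENNReal.ofReal t < volume (Ioo (0:ℝ) 1) := by
    rw [Real.volume_Ioo]
    simpa using ENNReal.ofReal_lt_one.mpr ht
  obtain ⟨n, hn⟩ := (htend.eventually_const_lt h1).exists
  refine ⟨-(n:ℝ), fun c hc => ?_⟩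
  by_contra hlt
  push_neg at hlt
  have : dd f (-(n:ℝ)) ≤ dd f c := dd_antitone f hlt.le
  exact absurd (le_trans this hc) (not_le.mpr hn)

lemma ofReal_lt_dd_of_lt_rr {f : ℝ → ℝ} {t c : ℝ} (hbd : BddBelow (SS f t))
    (h : c < rr f t) : ENNReal.ofReal t < dd f c := by
  rw [rr_eq] at h
  by_contra hc
  push_neg at hc
  exact absurd (csInf_le hbd hc) (not_le.mpr h)

lemma dd_le_of_rr_lt {f : ℝ → ℝ} {t c : ℝ} (hne : (SS f t).Nonempty)
    (h : rr f t < c) : dd f c ≤ ENNReal.ofReal t := by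
  rw [rr_eq] at h
  obtain ⟨c', hc', hlt⟩ := exists_lt_of_csInf_lt hne h
  exact SS_upward hc' hlt.le

lemma le_rr_of_lt_dd {f : ℝ → ℝ} {t c : ℝ} (hne : (SS f t).Nonempty)
    (h : ENNReal.ofReal t < dd f c) : c ≤ rr f t := by
  rw [rr_eq]
  refine le_csInf hne (fun c' hc' => ?_)
  by_contra hlt
  push_neg at hlt
  exact absurd (SS_upward hc' hlt.le) (fun hm => absurd hm (by simp [mem_SS, not_le, h]))

lemma rr_antitoneOn {f : ℝ → ℝ} (hf : Measurable f) :
    AntitoneOn (rr f) (Ioo (0:ℝ) 1) := by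
  intro t ht t' ht' htt
  rw [rr_eq, rr_eq]
  exact csInf_le_csInf (SS_bddBelow ht'.2) (SS_nonempty hf ht.1) (SS_mono f htt)

/-- `rr` only depends on the distribution function. -/
lemma rr_congr {f g : ℝ → ℝ} (h : ∀ c, dd f c = dd g c) : rr f = rr g := by
  funext t
  rw [rr_eq, rr_eq]
  congr 1
  ext c
  simp [mem_SS, SS, h c]

lemma dd_le_congr_ae {f g : ℝ → ℝ}
    (h0 : volume ({u | f u ≠ g u} ∩ Ioo (0:ℝ) 1) = 0) (c : ℝ) : dd f c ≤ dd g c := by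
  calc dd f c ≤ volume ({u ∈ Ioo (0:ℝ) 1 | c < g u} ∪ ({u | f u ≠ g u} ∩ Ioo (0:ℝ) 1)) := by
        apply measure_mono
        intro u hu
        by_cases he : f u = g u
        · exact Or.inl ⟨hu.1, he ▸ hu.2⟩
        · exact Or.inr ⟨he, hu.1⟩
    _ ≤ dd g c + volume ({u | f u ≠ g u} ∩ Ioo (0:ℝ) 1) := measure_union_le _ _
    _ = dd g c := by rw [h0, add_zero]

lemma dd_congr_ae {f g : ℝ → ℝ}
    (h : f =ᵐ[volume.restrict (Ioo (0:ℝ) 1)] g) (c : ℝ) : dd f c = dd g c := by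
  have h0 : volume ({u | f u ≠ g u} ∩ Ioo (0:ℝ) 1) = 0 := by
    have := ae_iff.mp h
    rwa [Measure.restrict_apply' measurableSet_Ioo] at this
  have h0' : volume ({u | g u ≠ f u} ∩ Ioo (0:ℝ) 1) = 0 := by
    convert h0 using 3
    ext u; exact ne_comm
  exact le_antisymm (dd_le_congr_ae h0 c) (dd_le_congr_ae h0' c)


lemma ofReal_max_zero (a : ℝ) : ENNReal.ofReal (max a 0) = ENNReal.ofReal a := by
  rcases le_total a 0 with h | h
  · rw [max_eq_right h, ENNReal.ofReal_zero, ENNReal.ofReal_of_nonpos h]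
  · rw [max_eq_left h]

/-- upper bound for the measure of super-level sets of `rr f`. -/
lemma meas_rr_gt_le (f : ℝ → ℝ) (c : ℝ) :
    volume {t ∈ Ioo (0:ℝ) 1 | c < rr f t} ≤ dd f c := by
  have hsub : {t ∈ Ioo (0:ℝ) 1 | c < rr f t} ⊆ Ioo 0 ((dd f c).toReal) := by
    rintro t ⟨ht, hlt⟩
    refine ⟨ht.1, ?_⟩
    have h1 : ENNReal.ofReal t < dd f c := ofReal_lt_dd_of_lt_rr (SS_bddBelow ht.2) hlt
    rwa [ENNReal.ofReal_lt_iff_lt_toReal ht.1.le (dd_ne_top f c)] at h1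
  calc volume {t ∈ Ioo (0:ℝ) 1 | c < rr f t} ≤ volume (Ioo 0 ((dd f c).toReal)) :=
        measure_mono hsub
    _ = ENNReal.ofReal ((dd f c).toReal) := by rw [Real.volume_Ioo, sub_zero]
    _ = dd f c := ENNReal.ofReal_toReal (dd_ne_top f c)

/-- upper bound for the measure of sub-level sets of `rr f`. -/
lemma meas_rr_lt_le {f : ℝ → ℝ} (hf : Measurable f) (c : ℝ) :
    volume {t ∈ Ioo (0:ℝ) 1 | rr f t < c} ≤ volume {u ∈ Ioo (0:ℝ) 1 | f u ≤ c} := by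
  set τ := (dd f c).toReal with hτ
  have hτ1 : τ ≤ 1 := by
    rw [hτ]
    calc (dd f c).toReal ≤ (1:ℝ≥0∞).toReal := ENNReal.toReal_mono ENNReal.one_ne_top (dd_le_one f c)
      _ = 1 := by simp
  have hsub : {t ∈ Ioo (0:ℝ) 1 | rr f t < c} ⊆ Ico τ 1 := by
    rintro t ⟨ht, hlt⟩
    refine ⟨?_, ht.2⟩
    have h1 : dd f c ≤ ENNReal.ofReal t := dd_le_of_rr_lt (SS_nonempty hf ht.1) hlt
    have := ENNReal.toReal_mono ENNReal.ofReal_ne_top h1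
    rwa [ENNReal.toReal_ofReal ht.1.le] at this
  have hdiff : {u ∈ Ioo (0:ℝ) 1 | f u ≤ c} = Ioo (0:ℝ) 1 \ {u ∈ Ioo (0:ℝ) 1 | c < f u} := by
    ext u
    simp only [mem_diff, mem_setOf_eq, not_and, not_lt]
    constructor
    · rintro ⟨h1, h2⟩; exact ⟨h1, fun _ => h2⟩
    · rintro ⟨h1, h2⟩; exact ⟨h1, h2 h1⟩
  have hmeasset : MeasurableSet {u ∈ Ioo (0:ℝ) 1 | c < f u} := by
    have : {u ∈ Ioo (0:ℝ) 1 | c < f u} = Ioo (0:ℝ) 1 ∩ f ⁻¹' (Ioi c) := by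
      ext u; simp [mem_setOf_eq]
    rw [this]; exact measurableSet_Ioo.inter (hf measurableSet_Ioi)
  calc volume {t ∈ Ioo (0:ℝ) 1 | rr f t < c} ≤ volume (Ico τ 1) := measure_mono hsub
    _ = ENNReal.ofReal (1 - τ) := by rw [Real.volume_Ico]
    _ = 1 - ENNReal.ofReal τ := by
        rw [ENNReal.ofReal_sub _ (ENNReal.toReal_nonneg), ENNReal.ofReal_one]
    _ = 1 - dd f c := by rw [ENNReal.ofReal_toReal (dd_ne_top f c)]
    _ = volume (Ioo (0:ℝ) 1) - volume {u ∈ Ioo (0:ℝ) 1 | c < f u} := by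
        rw [Real.volume_Ioo]; norm_num [dd]
    _ = volume {u ∈ Ioo (0:ℝ) 1 | f u ≤ c} := by
        rw [hdiff]
        rw [measure_diff (fun u hu => hu.1) hmeasset.nullMeasurableSet (dd_ne_top f c)]
    _ ≤ volume {u ∈ Ioo (0:ℝ) 1 | f u ≤ c} := le_rfl


lemma sep_lt_measurable {f : ℝ → ℝ} (hf : Measurable f) (c : ℝ) :
    MeasurableSet {u ∈ Ioo (0:ℝ) 1 | c < f u} := by
  have : {u ∈ Ioo (0:ℝ) 1 | c < f u} = Ioo (0:ℝ) 1 ∩ f ⁻¹' (Ioi c) := by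
    ext u; simp [mem_setOf_eq]
  rw [this]; exact measurableSet_Ioo.inter (hf measurableSet_Ioi)

lemma integrableOn_rr {f : ℝ → ℝ} (hf : Measurable f) (hint : IntegrableOn f (Ioo (0:ℝ) 1)) :
    IntegrableOn (rr f) (Ioo (0:ℝ) 1) := by
  have hmble : AEMeasurable (rr f) (volume.restrict (Ioo (0:ℝ) 1)) :=
    aemeasurable_restrict_of_antitoneOn measurableSet_Ioo (rr_antitoneOn hf)
  have hfin : (∫⁻ u in Ioo (0:ℝ) 1, (‖f u‖₊ : ℝ≥0∞)) < ⊤ := hint.2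
  have key1 : (∫⁻ t in Ioo (0:ℝ) 1, ENNReal.ofReal (rr f t)) ≤
      ∫⁻ u in Ioo (0:ℝ) 1, (‖f u‖₊ : ℝ≥0∞) := by
    calc (∫⁻ t in Ioo (0:ℝ) 1, ENNReal.ofReal (rr f t))
        = ∫⁻ t in Ioo (0:ℝ) 1, ENNReal.ofReal (max (rr f t) 0) := by
          simp_rw [ofReal_max_zero]
      _ = ∫⁻ c in Ioi (0:ℝ), (volume.restrict (Ioo (0:ℝ) 1)) {t | c < max (rr f t) 0} :=
          lintegral_eq_lintegral_meas_lt _ (Filter.Eventually.of_forall fun t => le_max_right _ _)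
            (hmble.max aemeasurable_const)
      _ ≤ ∫⁻ c in Ioi (0:ℝ), volume {u ∈ Ioo (0:ℝ) 1 | c < f u} := by
          apply lintegral_mono_ae
          filter_upwards [self_mem_ae_restrict measurableSet_Ioi] with c hc
          have hset : {t | c < max (rr f t) 0} ∩ Ioo (0:ℝ) 1 = {t ∈ Ioo (0:ℝ) 1 | c < rr f t} := by
            ext t
            simp only [mem_inter_iff, mem_setOf_eq, lt_max_iff, and_comm]
            have : ¬ (c < 0) := not_lt.mpr (le_of_lt hc)
            tauto
          rw [Measure.restrict_apply' measurableSet_Ioo, hset]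
          exact meas_rr_gt_le f c
      _ = ∫⁻ c in Ioi (0:ℝ), (volume.restrict (Ioo (0:ℝ) 1)) {u | c < max (f u) 0} := by
          apply setLIntegral_congr_fun measurableSet_Ioi
          intro c hc
          beta_reduce
          have hset : {u | c < max (f u) 0} ∩ Ioo (0:ℝ) 1 = {u ∈ Ioo (0:ℝ) 1 | c < f u} := by
            ext u
            simp only [mem_inter_iff, mem_setOf_eq, lt_max_iff, and_comm]
            have : ¬ (c < 0) := not_lt.mpr (le_of_lt hc)
            tauto
          rw [Measure.restrict_apply' measurableSet_Ioo, hset]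
      _ = ∫⁻ u in Ioo (0:ℝ) 1, ENNReal.ofReal (max (f u) 0) :=
          (lintegral_eq_lintegral_meas_lt _ (Filter.Eventually.of_forall fun u => le_max_right _ _)
            ((hf.max measurable_const).aemeasurable)).symm
      _ = ∫⁻ u in Ioo (0:ℝ) 1, ENNReal.ofReal (f u) := by simp_rw [ofReal_max_zero]
      _ ≤ ∫⁻ u in Ioo (0:ℝ) 1, (‖f u‖₊ : ℝ≥0∞) :=
          lintegral_mono fun u => Real.ofReal_le_enorm (f u)
  have key2 : (∫⁻ t in Ioo (0:ℝ) 1, ENNReal.ofReal (-(rr f t))) ≤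
      ∫⁻ u in Ioo (0:ℝ) 1, (‖f u‖₊ : ℝ≥0∞) := by
    calc (∫⁻ t in Ioo (0:ℝ) 1, ENNReal.ofReal (-(rr f t)))
        = ∫⁻ t in Ioo (0:ℝ) 1, ENNReal.ofReal (max (-(rr f t)) 0) := by
          simp_rw [ofReal_max_zero]
      _ = ∫⁻ c in Ioi (0:ℝ), (volume.restrict (Ioo (0:ℝ) 1)) {t | c < max (-(rr f t)) 0} :=
          lintegral_eq_lintegral_meas_lt _ (Filter.Eventually.of_forall fun t => le_max_right _ _)
            ((hmble.neg).max aemeasurable_const)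
      _ ≤ ∫⁻ c in Ioi (0:ℝ), volume {u ∈ Ioo (0:ℝ) 1 | f u ≤ -c} := by
          apply lintegral_mono_ae
          filter_upwards [self_mem_ae_restrict measurableSet_Ioi] with c hc
          have hset : {t | c < max (-(rr f t)) 0} ∩ Ioo (0:ℝ) 1
              = {t ∈ Ioo (0:ℝ) 1 | rr f t < -c} := by
            ext t
            simp only [mem_inter_iff, mem_setOf_eq, lt_max_iff, and_comm, lt_neg]
            have : ¬ (c < 0) := not_lt.mpr (le_of_lt hc)
            constructor
            · rintro ⟨h1, h2⟩
              rcases h1 with h1 | h1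
              · exact ⟨by linarith, h2⟩
              · exact absurd h1 this
            · rintro ⟨h1, h2⟩
              exact ⟨Or.inl (by linarith), h2⟩
          rw [Measure.restrict_apply' measurableSet_Ioo, hset]
          have := meas_rr_lt_le hf (-c)
          exact this
      _ = ∫⁻ c in Ioi (0:ℝ), (volume.restrict (Ioo (0:ℝ) 1)) {u | c ≤ max (-(f u)) 0} := by
          apply setLIntegral_congr_fun measurableSet_Ioi
          intro c hc
          beta_reduce
          have hset : {u | c ≤ max (-(f u)) 0} ∩ Ioo (0:ℝ) 1 = {u ∈ Ioo (0:ℝ) 1 | f u ≤ -c} := by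
            ext u
            simp only [mem_inter_iff, mem_setOf_eq, le_max_iff, and_comm, le_neg]
            have : ¬ (c ≤ 0) := not_le.mpr hc
            constructor
            · rintro ⟨h1, h2⟩
              rcases h1 with h1 | h1
              · exact ⟨by linarith, h2⟩
              · exact absurd h1 this
            · rintro ⟨h1, h2⟩
              exact ⟨Or.inl (by linarith), h2⟩
          rw [Measure.restrict_apply' measurableSet_Ioo, hset]
      _ = ∫⁻ u in Ioo (0:ℝ) 1, ENNReal.ofReal (max (-(f u)) 0) :=
          (lintegral_eq_lintegral_meas_le _ (Filter.Eventually.of_forall fun u => le_max_right _ _)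
            ((hf.neg.max measurable_const).aemeasurable)).symm
      _ ≤ ∫⁻ u in Ioo (0:ℝ) 1, (‖f u‖₊ : ℝ≥0∞) := by
          apply lintegral_mono
          intro u
          calc ENNReal.ofReal (max (-(f u)) 0) ≤ ENNReal.ofReal |f u| := by
                apply ENNReal.ofReal_le_ofReal
                rcases le_total (f u) 0 with h | h
                · rw [max_eq_left (by linarith), abs_of_nonpos h]
                · rw [max_eq_right (by linarith)]; exact abs_nonneg _
            _ = (‖f u‖₊ : ℝ≥0∞) := (Real.enorm_eq_ofReal_abs (f u)).symm
  refine ⟨hmble.aestronglyMeasurable, ?_⟩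
  have hnorm : ∀ t, (‖rr f t‖₊ : ℝ≥0∞) = ENNReal.ofReal (rr f t) + ENNReal.ofReal (-(rr f t)) := by
    intro t
    rw [← enorm_eq_nnnorm, Real.enorm_eq_ofReal_abs]
    rcases le_total (rr f t) 0 with h | h
    · rw [abs_of_nonpos h, ENNReal.ofReal_of_nonpos h, zero_add]
    · rw [abs_of_nonneg h, ENNReal.ofReal_of_nonpos (neg_nonpos.mpr h), add_zero]
  rw [HasFiniteIntegral]
  calc (∫⁻ t in Ioo (0:ℝ) 1, (‖rr f t‖₊ : ℝ≥0∞))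
      = ∫⁻ t in Ioo (0:ℝ) 1, (ENNReal.ofReal (rr f t) + ENNReal.ofReal (-(rr f t))) := by
        simp_rw [hnorm]
    _ = (∫⁻ t in Ioo (0:ℝ) 1, ENNReal.ofReal (rr f t))
        + ∫⁻ t in Ioo (0:ℝ) 1, ENNReal.ofReal (-(rr f t)) :=
        lintegral_add_left' hmble.ennreal_ofReal _
    _ < ⊤ := ENNReal.add_lt_top.mpr ⟨lt_of_le_of_lt key1 hfin, lt_of_le_of_lt key2 hfin⟩


section Window
variable {f g : ℝ → ℝ} {s₁ s₄ α' β' : ℝ}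

/-- the window hypothesis : `g` agrees with `f` except on points (inside `(0,1)`)
where both values lie in `(β', α']`. -/
def Win (f g : ℝ → ℝ) (β' α' : ℝ) : Prop :=
  ∀ u, g u = f u ∨ (β' < f u ∧ f u ≤ α' ∧ β' < g u ∧ g u ≤ α')

lemma dd_win_high (hw : Win f g β' α') {c : ℝ} (hc : α' ≤ c) : dd g c = dd f c := by
  unfold dd; congr 1; ext u
  simp only [mem_setOf_eq, and_congr_right_iff]
  intro _
  rcases hw u with he | hwin
  · rw [he]
  · constructor
    · intro h; exact absurd h (not_lt.mpr (hwin.2.2.2.trans hc))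
    · intro h; exact absurd h (not_lt.mpr (hwin.2.1.trans hc))

lemma dd_win_low (hw : Win f g β' α') {c : ℝ} (hc : c < β') : dd g c = dd f c := by
  unfold dd; congr 1; ext u
  simp only [mem_setOf_eq, and_congr_right_iff]
  intro _
  rcases hw u with he | hwin
  · rw [he]
  · constructor
    · intro _; exact hc.trans hwin.1
    · intro _; exact hc.trans hwin.2.2.1

lemma rr_win_left (hfm : Measurable f) (hw : Win f g β' α')
    (h1 : s₁ < 1) (hα : α' < rr f s₁) {t : ℝ} (ht : t ≤ s₁) : rr g t = rr f t := by
  have hdf : ENNReal.ofReal s₁ < dd f α' := ofReal_lt_dd_of_lt_rr (SS_bddBelow h1) hα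
  have hflow : ∀ c, c < α' → ENNReal.ofReal t < dd f c := fun c hc =>
    lt_of_lt_of_le (lt_of_le_of_lt (ENNReal.ofReal_le_ofReal ht) hdf) (dd_antitone f hc.le)
  have hglow : ∀ c, c < α' → ENNReal.ofReal t < dd g c := by
    intro c hc
    have hsub : {u ∈ Ioo (0:ℝ) 1 | α' < f u} ⊆ {u ∈ Ioo (0:ℝ) 1 | c < g u} := by
      rintro u ⟨hu, hfu⟩
      rcases hw u with he | hwin
      · exact ⟨hu, by rw [he]; exact hc.trans hfu⟩
      · exact absurd hfu (not_lt.mpr hwin.2.1)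
    exact lt_of_lt_of_le (lt_of_le_of_lt (ENNReal.ofReal_le_ofReal ht) hdf) (measure_mono hsub)
  have hSS : SS g t = SS f t := by
    ext c
    rcases lt_or_ge c α' with hc | hc
    · simp only [mem_SS, not_le.symm]
      constructor
      · intro h; exact absurd h (not_le.mpr (hglow c hc))
      · intro h; exact absurd h (not_le.mpr (hflow c hc))
    · simp only [mem_SS, dd_win_high hw hc]
  rw [rr_eq, rr_eq, hSS]

lemma rr_win_right (hfm : Measurable f) (hgm : Measurable g) (hw : Win f g β' α')
    (h04 : 0 < s₄) (h41 : s₄ < 1) (hβ : rr f s₄ < β')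
    {t : ℝ} (ht4 : s₄ ≤ t) (ht1 : t < 1) : rr g t = rr f t := by
  have h0t : 0 < t := h04.trans_le ht4
  have hne_f : (SS f t).Nonempty := SS_nonempty hfm h0t
  have hbd_f : BddBelow (SS f t) := SS_bddBelow ht1
  have hbd_g : BddBelow (SS g t) := SS_bddBelow ht1
  have hrt : rr f t < β' := by
    rcases eq_or_lt_of_le ht4 with he | hlt
    · rwa [← he]
    · exact lt_of_le_of_lt
        (rr_antitoneOn hfm ⟨h04, h41⟩ ⟨h04.trans hlt, ht1⟩ ht4) hβ
  obtain ⟨c, hcS, hcβ⟩ : ∃ c ∈ SS f t, c < β' := by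
    have := exists_lt_of_csInf_lt hne_f (by rw [← rr_eq]; exact hrt)
    exact this
  have hcSg : c ∈ SS g t := by rw [mem_SS, dd_win_low hw hcβ]; exact hcS
  have hle1 : rr g t ≤ rr f t := by
    rw [rr_eq f t]
    refine le_csInf hne_f (fun c' hc' => ?_)
    rcases lt_or_ge c' β' with hc'β | hc'β
    · have : c' ∈ SS g t := by rw [mem_SS, dd_win_low hw hc'β]; exact hc'
      rw [rr_eq]; exact csInf_le hbd_g this
    · calc rr g t ≤ c := by rw [rr_eq]; exact csInf_le hbd_g hcSg
        _ ≤ c' := hcβ.le.trans hc'β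
  have hle2 : rr f t ≤ rr g t := by
    have hrgt : rr g t < β' := lt_of_le_of_lt hle1 hrt
    obtain ⟨c'', hc''S, hc''β⟩ : ∃ c'' ∈ SS g t, c'' < β' := by
      have := exists_lt_of_csInf_lt ⟨c, hcSg⟩ (by rw [← rr_eq]; exact hrgt)
      exact this
    rw [rr_eq g t]
    refine le_csInf ⟨c, hcSg⟩ (fun c' hc' => ?_)
    rcases lt_or_ge c' β' with hc'β | hc'β
    · have : c' ∈ SS f t := by rw [mem_SS, ← dd_win_low hw hc'β]; exact hc'
      rw [rr_eq]; exact csInf_le hbd_f this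
    · have hfc : rr f t ≤ c'' := by
        rw [rr_eq]
        exact csInf_le hbd_f (by rw [mem_SS, ← dd_win_low hw hc''β]; exact hc''S)
      exact hfc.trans (hc''β.le.trans hc'β)
  exact le_antisymm hle1 hle2

end Window

lemma countable_flat (φ : ℝ → ℝ) {s₁ s₄ : ℝ} (hφ : AntitoneOn φ (Ioo s₁ s₄)) :
    {c : ℝ | 0 < volume {t ∈ Ioo s₁ s₄ | φ t = c}}.Countable := by
  have hsub : {c : ℝ | 0 < volume {t ∈ Ioo s₁ s₄ | φ t = c}} ⊆
      range (fun q : ℚ => φ (q : ℝ)) := by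
    intro c hc
    simp only [mem_setOf_eq] at hc
    have hnsub : ¬ ({t ∈ Ioo s₁ s₄ | φ t = c}).Subsingleton := by
      intro hss
      exact hc.ne' (hss.measure_zero volume)
    rw [Set.not_subsingleton_iff] at hnsub
    obtain ⟨t₁, ht₁, t₂, ht₂, hne⟩ := hnsub
    rcases hne.lt_or_gt with hlt | hlt
    · obtain ⟨q, hq1, hq2⟩ := exists_rat_btwn hlt
      have hqI : (q:ℝ) ∈ Ioo s₁ s₄ := ⟨ht₁.1.1.trans hq1, hq2.trans ht₂.1.2⟩
      refine ⟨q, le_antisymm ?_ ?_⟩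
      · show φ (q:ℝ) ≤ c
        rw [← ht₁.2]; exact hφ ht₁.1 hqI hq1.le
      · show c ≤ φ (q:ℝ)
        rw [← ht₂.2]; exact hφ hqI ht₂.1 hq2.le
    · obtain ⟨q, hq1, hq2⟩ := exists_rat_btwn hlt
      have hqI : (q:ℝ) ∈ Ioo s₁ s₄ := ⟨ht₂.1.1.trans hq1, hq2.trans ht₁.1.2⟩
      refine ⟨q, le_antisymm ?_ ?_⟩
      · show φ (q:ℝ) ≤ c
        rw [← ht₂.2]; exact hφ ht₂.1 hqI hq1.le
      · show c ≤ φ (q:ℝ)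
        rw [← ht₁.2]; exact hφ hqI ht₁.1 hq2.le
  exact Countable.mono hsub (countable_range _)

lemma meas_between {f : ℝ → ℝ} (hfm : Measurable f) {s₁ s₄ : ℝ}
    (h01 : 0 < s₁) (h14 : s₁ < s₄) (h41 : s₄ < 1) {v : ℝ}
    (h4 : rr f s₄ < v) (h1 : v < rr f s₁)
    (hnull : volume {t ∈ Ioo s₁ s₄ | rr f t = v} = 0) :
    volume {t ∈ Ioo s₁ s₄ | v < rr f t} = dd f v - ENNReal.ofReal s₁ := by
  have hd1 : ENNReal.ofReal s₁ < dd f v :=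
    ofReal_lt_dd_of_lt_rr (SS_bddBelow (h14.trans h41)) h1
  have hd4 : dd f v ≤ ENNReal.ofReal s₄ :=
    dd_le_of_rr_lt (SS_nonempty hfm (h01.trans h14)) h4
  set τ := (dd f v).toReal with hτdef
  have hτ1 : s₁ < τ := by
    rw [hτdef]
    rwa [ENNReal.ofReal_lt_iff_lt_toReal h01.le (dd_ne_top f v)] at hd1
  have hτ4 : τ ≤ s₄ := by
    have h := ENNReal.toReal_mono ENNReal.ofReal_ne_top hd4
    rwa [ENNReal.toReal_ofReal (h01.trans h14).le] at h
  have hup : {t ∈ Ioo s₁ s₄ | v < rr f t} ⊆ Ioo s₁ τ := by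
    rintro t ⟨htI, hlt⟩
    refine ⟨htI.1, ?_⟩
    have := ofReal_lt_dd_of_lt_rr (SS_bddBelow (htI.2.trans h41)) hlt
    rwa [ENNReal.ofReal_lt_iff_lt_toReal (h01.trans htI.1).le (dd_ne_top f v)] at this
  have hlo : Ioo s₁ τ ⊆ {t ∈ Ioo s₁ s₄ | v ≤ rr f t} := by
    rintro t ⟨ht1, htτ⟩
    have htI : t ∈ Ioo s₁ s₄ := ⟨ht1, lt_of_lt_of_le htτ hτ4⟩
    refine ⟨htI, ?_⟩
    apply le_rr_of_lt_dd (SS_nonempty hfm (h01.trans ht1))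
    rw [ENNReal.ofReal_lt_iff_lt_toReal (h01.trans ht1).le (dd_ne_top f v)]
    exact htτ
  have hub : volume {t ∈ Ioo s₁ s₄ | v < rr f t} ≤ ENNReal.ofReal (τ - s₁) := by
    calc volume {t ∈ Ioo s₁ s₄ | v < rr f t} ≤ volume (Ioo s₁ τ) := measure_mono hup
      _ = ENNReal.ofReal (τ - s₁) := Real.volume_Ioo
  have hlb : ENNReal.ofReal (τ - s₁) ≤ volume {t ∈ Ioo s₁ s₄ | v < rr f t} := by
    have h1' : ENNReal.ofReal (τ - s₁) ≤ volume {t ∈ Ioo s₁ s₄ | v ≤ rr f t} := by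
      rw [← Real.volume_Ioo]
      exact measure_mono hlo
    have h2' : volume {t ∈ Ioo s₁ s₄ | v ≤ rr f t} ≤
        volume {t ∈ Ioo s₁ s₄ | v < rr f t} + volume {t ∈ Ioo s₁ s₄ | rr f t = v} := by
      refine le_trans (measure_mono ?_) (measure_union_le _ _)
      rintro t ⟨htI, hle⟩
      rcases eq_or_lt_of_le hle with he | hlt
      · exact Or.inr ⟨htI, he.symm⟩
      · exact Or.inl ⟨htI, hlt⟩
    rw [hnull, add_zero] at h2'
    exact le_trans h1' h2'
  have : volume {t ∈ Ioo s₁ s₄ | v < rr f t} = ENNReal.ofReal (τ - s₁) :=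
    le_antisymm hub hlb
  rw [this, ENNReal.ofReal_sub _ h01.le, ENNReal.ofReal_toReal (dd_ne_top f v)]


lemma integrableOn_rr_Ico {φ : ℝ → ℝ} (hφm : Measurable φ) {a b : ℝ}
    (ha : 0 < a) (hab : a ≤ b) (hb : b < 1) : IntegrableOn (rr φ) (Ico a b) := by
  have hsub : Ico a b ⊆ Ioo (0:ℝ) 1 := fun t ht => ⟨ha.trans_le ht.1, ht.2.trans_le hb.le⟩
  have hmeas : AEMeasurable (rr φ) (volume.restrict (Ico a b)) :=
    aemeasurable_restrict_of_antitoneOn measurableSet_Ico ((rr_antitoneOn hφm).mono hsub)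
  refine Integrable.mono' (integrable_const (max |rr φ a| |rr φ b|))
    hmeas.aestronglyMeasurable ?_
  filter_upwards [self_mem_ae_restrict measurableSet_Ico] with t ht
  have htI : t ∈ Ioo (0:ℝ) 1 := hsub ht
  have haI : a ∈ Ioo (0:ℝ) 1 := ⟨ha, lt_of_le_of_lt hab hb⟩
  have hbI : b ∈ Ioo (0:ℝ) 1 := ⟨ha.trans_le hab, hb⟩
  have h1 : rr φ t ≤ rr φ a := rr_antitoneOn hφm haI htI ht.1
  have h2 : rr φ b ≤ rr φ t := rr_antitoneOn hφm htI hbI ht.2.le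
  rw [Real.norm_eq_abs, abs_le]
  constructor
  · exact le_trans (neg_le_neg (le_max_right _ _)) ((neg_abs_le _).trans h2)
  · exact h1.trans ((le_abs_self _).trans (le_max_left _ _))

lemma layer_sum {φ : ℝ → ℝ} (hφm : Measurable φ) {s₁ s₄ r₁ r₄ : ℝ}
    (h01 : 0 < s₁) (h14 : s₁ < s₄) (h41 : s₄ < 1)
    (h_1 : rr φ s₁ = r₁) (h_4 : rr φ s₄ = r₄) (hr : r₄ < r₁) :
    (∫⁻ t in Ioo s₁ s₄, ENNReal.ofReal (rr φ t - r₄))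
      + ENNReal.ofReal s₁ * ENNReal.ofReal (r₁ - r₄)
      = ∫⁻ u in Ioo (0:ℝ) 1, ENNReal.ofReal (max (min (φ u) r₁ - r₄) 0) := by
  set L := r₁ - r₄ with hL
  have hL0 : 0 < L := by simp only [hL, sub_pos]; exact hr
  have hsub14 : Ioo s₁ s₄ ⊆ Ioo (0:ℝ) 1 := fun t ht => ⟨h01.trans ht.1, ht.2.trans h41⟩
  have hs1I : s₁ ∈ Ioo (0:ℝ) 1 := ⟨h01, h14.trans h41⟩
  have hs4I : s₄ ∈ Ioo (0:ℝ) 1 := ⟨h01.trans h14, h41⟩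
  have hantOn : AntitoneOn (rr φ) (Ioo (0:ℝ) 1) := rr_antitoneOn hφm
  have hbound : ∀ t ∈ Ioo s₁ s₄, r₄ ≤ rr φ t ∧ rr φ t ≤ r₁ := by
    intro t ht
    constructor
    · rw [← h_4]; exact hantOn (hsub14 ht) hs4I ht.2.le
    · rw [← h_1]; exact hantOn hs1I (hsub14 ht) ht.1.le
  have hmeas : AEMeasurable (fun t => rr φ t - r₄) (volume.restrict (Ioo s₁ s₄)) :=
    ((aemeasurable_restrict_of_antitoneOn measurableSet_Ioo
      (hantOn.mono hsub14))).sub aemeasurable_const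
  have hnn : 0 ≤ᵐ[volume.restrict (Ioo s₁ s₄)] fun t => rr φ t - r₄ := by
    filter_upwards [self_mem_ae_restrict measurableSet_Ioo] with t ht
    simp only [Pi.zero_apply, sub_nonneg]
    exact (hbound t ht).1
  -- step 1 : layer cake on the left-hand side
  have lc1 : (∫⁻ t in Ioo s₁ s₄, ENNReal.ofReal (rr φ t - r₄))
      = ∫⁻ c in Ioi (0:ℝ), volume {t ∈ Ioo s₁ s₄ | r₄ + c < rr φ t} := by
    rw [lintegral_eq_lintegral_meas_lt _ hnn hmeas]
    apply setLIntegral_congr_fun measurableSet_Ioi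
    intro c _
    beta_reduce
    rw [Measure.restrict_apply' measurableSet_Ioo]
    congr 1
    ext t
    simp only [mem_inter_iff, mem_setOf_eq, lt_sub_iff_add_lt', and_comm]
  -- the exceptional set
  have hbadcnt : ({c : ℝ | 0 < volume {t ∈ Ioo s₁ s₄ | rr φ t = r₄ + c}}).Countable := by
    have h1 : {c : ℝ | 0 < volume {t ∈ Ioo s₁ s₄ | rr φ t = r₄ + c}}
        = (fun c => r₄ + c) ⁻¹' {v : ℝ | 0 < volume {t ∈ Ioo s₁ s₄ | rr φ t = v}} := rfl
    rw [h1]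
    exact Set.Countable.preimage (countable_flat (rr φ) (hantOn.mono hsub14))
      (add_right_injective r₄)
  have hbadnull : ∀ᵐ c ∂(volume : Measure ℝ),
      c ∉ {c : ℝ | 0 < volume {t ∈ Ioo s₁ s₄ | rr φ t = r₄ + c}} :=
    measure_eq_zero_iff_ae_notMem.mp (hbadcnt.measure_zero volume)
  -- step 2 : identify the tail measures a.e.
  have step2 : (∫⁻ c in Ioi (0:ℝ), volume {t ∈ Ioo s₁ s₄ | r₄ + c < rr φ t})
      = ∫⁻ c in Ioi (0:ℝ),
          (Ioo (0:ℝ) L).indicator (fun c => dd φ (r₄ + c) - ENNReal.ofReal s₁) c := by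
    apply setLIntegral_congr_fun_ae measurableSet_Ioi
    filter_upwards [hbadnull] with c hbad hc
    simp only [mem_setOf_eq, not_lt, le_zero_iff] at hbad
    rcases lt_or_ge c L with hcL | hcL
    · have hmem : c ∈ Ioo (0:ℝ) L := mem_Ioo.mpr ⟨mem_Ioi.mp hc, hcL⟩
      rw [indicator_of_mem hmem]
      exact meas_between hφm h01 h14 h41
        (by rw [h_4]; linarith [mem_Ioi.mp hc])
        (by rw [h_1]; simp only [hL] at hcL; linarith) hbad
    · rw [indicator_of_notMem (fun hm => absurd hm.2 (not_lt.mpr hcL))]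
      have hempty : {t ∈ Ioo s₁ s₄ | r₄ + c < rr φ t} = ∅ := by
        ext t
        simp only [mem_setOf_eq, mem_empty_iff_false, iff_false, not_and]
        intro ht hlt
        have h2 : rr φ t ≤ r₁ := (hbound t ht).2
        simp only [hL] at hcL
        linarith
      rw [hempty, measure_empty]
  -- indicator integrals over `Ioi 0` localize to `Ioo 0 L`
  have hIooSub : Ioo (0:ℝ) L ⊆ Ioi (0:ℝ) := fun c hc => hc.1
  have step3 : ∀ F : ℝ → ℝ≥0∞,
      (∫⁻ c in Ioi (0:ℝ), (Ioo (0:ℝ) L).indicator F c) = ∫⁻ c in Ioo (0:ℝ) L, F c := by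
    intro F
    rw [lintegral_indicator measurableSet_Ioo,
      Measure.restrict_restrict measurableSet_Ioo, inter_eq_self_of_subset_left hIooSub]
  -- pointwise lower bound for `dd` on the window
  have hddge : ∀ c ∈ Ioo (0:ℝ) L, ENNReal.ofReal s₁ ≤ dd φ (r₄ + c) := by
    intro c hc
    apply le_of_lt
    apply ofReal_lt_dd_of_lt_rr (SS_bddBelow hs1I.2)
    rw [h_1]
    have := hc.2
    simp only [hL] at this
    linarith
  have hvol : volume (Ioo (0:ℝ) L) = ENNReal.ofReal L := by
    rw [Real.volume_Ioo, sub_zero]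
  have hconstfin : (∫⁻ _ in Ioo (0:ℝ) L, ENNReal.ofReal s₁) ≠ ⊤ := by
    rw [setLIntegral_const, hvol]
    exact ENNReal.mul_ne_top ENNReal.ofReal_ne_top ENNReal.ofReal_ne_top
  have step4 : (∫⁻ c in Ioo (0:ℝ) L, (dd φ (r₄ + c) - ENNReal.ofReal s₁))
      = (∫⁻ c in Ioo (0:ℝ) L, dd φ (r₄ + c)) - ENNReal.ofReal s₁ * ENNReal.ofReal L := by
    rw [lintegral_sub measurable_const hconstfin ?_, setLIntegral_const, hvol]
    filter_upwards [self_mem_ae_restrict measurableSet_Ioo] with c hc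
    exact hddge c hc
  -- ψ side
  set ψ := fun u => max (min (φ u) r₁ - r₄) 0 with hψ
  have hψm : Measurable ψ := ((hφm.min measurable_const).sub measurable_const).max measurable_const
  have hψnn : 0 ≤ᵐ[volume.restrict (Ioo (0:ℝ) 1)] ψ :=
    Filter.Eventually.of_forall fun u => le_max_right _ _
  have lc2 : (∫⁻ u in Ioo (0:ℝ) 1, ENNReal.ofReal (ψ u))
      = ∫⁻ c in Ioi (0:ℝ), (volume.restrict (Ioo (0:ℝ) 1)) {u | c < ψ u} :=
    lintegral_eq_lintegral_meas_lt _ hψnn hψm.aemeasurable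
  have step5 : (∫⁻ c in Ioi (0:ℝ), (volume.restrict (Ioo (0:ℝ) 1)) {u | c < ψ u})
      = ∫⁻ c in Ioi (0:ℝ), (Ioo (0:ℝ) L).indicator (fun c => dd φ (r₄ + c)) c := by
    apply setLIntegral_congr_fun measurableSet_Ioi
    intro c hc
    beta_reduce
    rw [Measure.restrict_apply' measurableSet_Ioo]
    rcases lt_or_ge c L with hcL | hcL
    · have hmem : c ∈ Ioo (0:ℝ) L := mem_Ioo.mpr ⟨mem_Ioi.mp hc, hcL⟩
      rw [indicator_of_mem hmem]
      have hset : {u | c < ψ u} ∩ Ioo (0:ℝ) 1 = {u ∈ Ioo (0:ℝ) 1 | r₄ + c < φ u} := by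
        ext u
        simp only [mem_inter_iff, mem_setOf_eq, hψ]
        constructor
        · rintro ⟨hlt, hu⟩
          refine ⟨hu, ?_⟩
          rcases lt_max_iff.mp hlt with h | h
          · have h' : r₄ + c < min (φ u) r₁ := by linarith
            exact lt_of_lt_of_le h' (min_le_left _ _)
          · exact absurd h (not_lt.mpr (le_of_lt (mem_Ioi.mp hc)))
        · rintro ⟨hu, hlt⟩
          refine ⟨?_, hu⟩
          apply lt_max_iff.mpr
          left
          have hr1 : r₄ + c < r₁ := by simp only [hL] at hcL; linarith
          have h1 : r₄ + c < min (φ u) r₁ := lt_min_iff.mpr ⟨hlt, hr1⟩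
          linarith
      rw [hset]
      rfl
    · rw [indicator_of_notMem (fun hm => absurd hm.2 (not_lt.mpr hcL))]
      have hempty : {u | c < ψ u} ∩ Ioo (0:ℝ) 1 = ∅ := by
        ext u
        simp only [mem_inter_iff, mem_setOf_eq, mem_empty_iff_false, iff_false, not_and, hψ]
        intro hlt
        exfalso
        rcases lt_max_iff.mp hlt with h | h
        · have h' : min (φ u) r₁ ≤ r₁ := min_le_right _ _
          simp only [hL] at hcL
          linarith
        · exact absurd h (not_lt.mpr (le_of_lt (mem_Ioi.mp hc)))
      rw [hempty, measure_empty]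
  -- the constant is dominated
  have hCle : ENNReal.ofReal s₁ * ENNReal.ofReal L ≤ ∫⁻ c in Ioo (0:ℝ) L, dd φ (r₄ + c) := by
    calc ENNReal.ofReal s₁ * ENNReal.ofReal L
        = ∫⁻ _ in Ioo (0:ℝ) L, ENNReal.ofReal s₁ := by rw [setLIntegral_const, hvol]
      _ ≤ ∫⁻ c in Ioo (0:ℝ) L, dd φ (r₄ + c) := by
          apply lintegral_mono_ae
          filter_upwards [self_mem_ae_restrict measurableSet_Ioo] with c hc
          exact hddge c hc
  -- put everything together
  calc (∫⁻ t in Ioo s₁ s₄, ENNReal.ofReal (rr φ t - r₄))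
      + ENNReal.ofReal s₁ * ENNReal.ofReal (r₁ - r₄)
      = ((∫⁻ c in Ioo (0:ℝ) L, dd φ (r₄ + c)) - ENNReal.ofReal s₁ * ENNReal.ofReal L)
        + ENNReal.ofReal s₁ * ENNReal.ofReal L := by
        rw [lc1, step2, step3, step4]
    _ = ∫⁻ c in Ioo (0:ℝ) L, dd φ (r₄ + c) := tsub_add_cancel_of_le hCle
    _ = ∫⁻ u in Ioo (0:ℝ) 1, ENNReal.ofReal (max (min (φ u) r₁ - r₄) 0) := by
        rw [← step3, ← step5, lc2]


lemma mid_eq {f g : ℝ → ℝ} (hfm : Measurable f) (hgm : Measurable g)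
    (hfi : IntegrableOn f (Ioo (0:ℝ) 1)) (hgi : IntegrableOn g (Ioo (0:ℝ) 1))
    {s₁ s₄ β' α' : ℝ} (h01 : 0 < s₁) (h14 : s₁ < s₄) (h41 : s₄ < 1)
    (hw : Win f g β' α') (hβ : rr f s₄ < β') (hα : α' < rr f s₁) (hβα : β' ≤ α')
    (hzero : (∫ u in Ioo (0:ℝ) 1, (g u - f u)) = 0) :
    (∫ t in Ioo s₁ s₄, rr g t) = ∫ t in Ioo s₁ s₄, rr f t := by
  set r₁ := rr f s₁ with hr₁
  set r₄ := rr f s₄ with hr₄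
  have hr : r₄ < r₁ := lt_of_lt_of_le hβ (le_of_lt (lt_of_le_of_lt hβα hα))
  have hg1 : rr g s₁ = r₁ := rr_win_left hfm hw (h14.trans h41) hα (le_refl s₁)
  have hg4 : rr g s₄ = r₄ :=
    rr_win_right hfm hgm hw (h01.trans h14) h41 hβ (le_refl s₄) h41
  -- ψ functions
  set ψf := fun u => max (min (f u) r₁ - r₄) 0 with hψf
  set ψg := fun u => max (min (g u) r₁ - r₄) 0 with hψg
  have hψfm : Measurable ψf := ((hfm.min measurable_const).sub measurable_const).max measurable_const
  have hψgm : Measurable ψg := ((hgm.min measurable_const).sub measurable_const).max measurable_const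
  have hψbd : ∀ (v : ℝ), ‖max (min v r₁ - r₄) 0‖ ≤ r₁ - r₄ := by
    intro v
    rw [Real.norm_eq_abs, abs_of_nonneg (le_max_right _ _)]
    apply max_le _ (by linarith)
    have : min v r₁ ≤ r₁ := min_le_right _ _
    linarith
  have hψfi : IntegrableOn ψf (Ioo (0:ℝ) 1) :=
    Integrable.mono' (integrable_const (r₁ - r₄)) hψfm.aestronglyMeasurable
      (Filter.Eventually.of_forall fun u => hψbd (f u))
  have hψgi : IntegrableOn ψg (Ioo (0:ℝ) 1) :=
    Integrable.mono' (integrable_const (r₁ - r₄)) hψgm.aestronglyMeasurable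
      (Filter.Eventually.of_forall fun u => hψbd (g u))
  -- pointwise: ψg = ψf + (g - f)
  have hpt : ∀ u, ψg u = ψf u + (g u - f u) := by
    intro u
    rcases hw u with he | hwin
    · rw [hψg, hψf]; simp only [he]; ring
    · obtain ⟨hf1, hf2, hg1', hg2⟩ := hwin
      have hfr : min (f u) r₁ = f u := min_eq_left (by linarith)
      have hgr : min (g u) r₁ = g u := min_eq_left (by linarith)
      have hfpos : 0 ≤ f u - r₄ := by linarith
      have hgpos : 0 ≤ g u - r₄ := by linarith
      rw [hψg, hψf]
      simp only [hfr, hgr, max_eq_left hfpos, max_eq_left hgpos]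
      ring
  have hψint_eq : (∫ u in Ioo (0:ℝ) 1, ψg u) = ∫ u in Ioo (0:ℝ) 1, ψf u := by
    calc (∫ u in Ioo (0:ℝ) 1, ψg u) = ∫ u in Ioo (0:ℝ) 1, (ψf u + (g u - f u)) := by
          apply integral_congr_ae
          exact Filter.Eventually.of_forall hpt
      _ = (∫ u in Ioo (0:ℝ) 1, ψf u) + ∫ u in Ioo (0:ℝ) 1, (g u - f u) :=
          integral_add hψfi (hgi.sub hfi)
      _ = ∫ u in Ioo (0:ℝ) 1, ψf u := by rw [hzero, add_zero]
  -- nonnegativity for ofReal conversions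
  have hψnn : ∀ (v : ℝ), (0:ℝ) ≤ max (min v r₁ - r₄) 0 := fun v => le_max_right _ _
  have hlin_eq : (∫⁻ u in Ioo (0:ℝ) 1, ENNReal.ofReal (ψg u))
      = ∫⁻ u in Ioo (0:ℝ) 1, ENNReal.ofReal (ψf u) := by
    rw [← ofReal_integral_eq_lintegral_ofReal hψgi
        (Filter.Eventually.of_forall fun u => hψnn (g u)),
      ← ofReal_integral_eq_lintegral_ofReal hψfi
        (Filter.Eventually.of_forall fun u => hψnn (f u)),
      hψint_eq]
  -- apply layer_sum to f and g and cancel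
  have hlsf := layer_sum hfm h01 h14 h41 hr₁.symm hr₄.symm hr
  have hlsg := layer_sum hgm h01 h14 h41 hg1 hg4 hr
  have hkey : (∫⁻ t in Ioo s₁ s₄, ENNReal.ofReal (rr g t - r₄))
      = ∫⁻ t in Ioo s₁ s₄, ENNReal.ofReal (rr f t - r₄) := by
    have h1 : (∫⁻ t in Ioo s₁ s₄, ENNReal.ofReal (rr g t - r₄))
        + ENNReal.ofReal s₁ * ENNReal.ofReal (r₁ - r₄)
        = (∫⁻ t in Ioo s₁ s₄, ENNReal.ofReal (rr f t - r₄))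
        + ENNReal.ofReal s₁ * ENNReal.ofReal (r₁ - r₄) := by
      rw [hlsf, hlsg, hlin_eq]
    exact (ENNReal.add_left_inj
      (ENNReal.mul_ne_top ENNReal.ofReal_ne_top ENNReal.ofReal_ne_top)).mp h1
  -- convert back to Bochner integrals
  have hsub14 : Ioo s₁ s₄ ⊆ Ioo (0:ℝ) 1 := fun t ht => ⟨h01.trans ht.1, ht.2.trans h41⟩
  have haux : ∀ (φ : ℝ → ℝ), Measurable φ → rr φ s₁ = r₁ → rr φ s₄ = r₄ →
      (∫ t in Ioo s₁ s₄, (rr φ t - r₄))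
        = ((∫⁻ t in Ioo s₁ s₄, ENNReal.ofReal (rr φ t - r₄))).toReal := by
    intro φ hφm h1' h4'
    apply integral_eq_lintegral_of_nonneg_ae
    · filter_upwards [self_mem_ae_restrict measurableSet_Ioo] with t ht
      simp only [Pi.zero_apply, sub_nonneg]
      rw [← h4']
      exact rr_antitoneOn hφm (hsub14 ht) ⟨h01.trans h14, h41⟩ ht.2.le
    · exact ((aemeasurable_restrict_of_antitoneOn measurableSet_Ioo
        ((rr_antitoneOn hφm).mono hsub14)).sub aemeasurable_const).aestronglyMeasurable
  have hreal : (∫ t in Ioo s₁ s₄, (rr g t - r₄)) = ∫ t in Ioo s₁ s₄, (rr f t - r₄) := by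
    rw [haux f hfm hr₁.symm hr₄.symm, haux g hgm hg1 hg4, hkey]
  -- finish
  have hif : IntegrableOn (rr f) (Ioo s₁ s₄) :=
    (integrableOn_rr_Ico hfm h01 h14.le h41).mono_set Ioo_subset_Ico_self
  have hig : IntegrableOn (rr g) (Ioo s₁ s₄) :=
    (integrableOn_rr_Ico hgm h01 h14.le h41).mono_set Ioo_subset_Ico_self
  have h1 : (∫ t in Ioo s₁ s₄, (rr g t - r₄))
      = (∫ t in Ioo s₁ s₄, rr g t) - ∫ t in Ioo s₁ s₄, (r₄:ℝ) :=
    integral_sub hig (integrableOn_const (by rw [Real.volume_Ioo]; exact ENNReal.ofReal_ne_top))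
  have h2 : (∫ t in Ioo s₁ s₄, (rr f t - r₄))
      = (∫ t in Ioo s₁ s₄, rr f t) - ∫ t in Ioo s₁ s₄, (r₄:ℝ) :=
    integral_sub hif (integrableOn_const (by rw [Real.volume_Ioo]; exact ENNReal.ofReal_ne_top))
  rw [h1, h2] at hreal
  linarith


lemma maj_perturbed {y f g : ℝ → ℝ} (hfm : Measurable f) (hgm : Measurable g)
    (hfi : IntegrableOn f (Ioo (0:ℝ) 1)) (hgi : IntegrableOn g (Ioo (0:ℝ) 1))
    {s₁ s₄ β' α' : ℝ} (h01 : 0 < s₁) (h14 : s₁ < s₄) (h41 : s₄ < 1)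
    (hw : Win f g β' α') (hβ : rr f s₄ < β') (hα : α' < rr f s₁) (hβα : β' ≤ α')
    (hzero : (∫ u in Ioo (0:ℝ) 1, (g u - f u)) = 0)
    (hmaj : Maj f y)
    (hbound : ∀ s ∈ Icc s₁ s₄,
      (∫ t in Ioo (0:ℝ) s₁, rr f t) + rr f s₁ * (s - s₁) ≤ ∫ t in Ioo (0:ℝ) s, rr y t) :
    Maj g y := by
  have h04 : 0 < s₄ := h01.trans h14
  have h11 : s₁ < 1 := h14.trans h41
  have hs1I : s₁ ∈ Ioo (0:ℝ) 1 := ⟨h01, h11⟩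
  -- agreement of rearrangements off (s₁, s₄)
  have P1 : ∀ t ≤ s₁, rr g t = rr f t := fun t ht => rr_win_left hfm hw h11 hα ht
  have P2 : ∀ t, s₄ ≤ t → t < 1 → rr g t = rr f t := fun t ht4 ht1 =>
    rr_win_right hfm hgm hw h04 h41 hβ ht4 ht1
  -- integrability of the rearrangements
  have hfrr : IntegrableOn (rr f) (Ioo (0:ℝ) 1) := integrableOn_rr hfm hfi
  have hsplit_sets : Ioo (0:ℝ) s₁ ∪ Ico s₁ s₄ ∪ Ico s₄ 1 = Ioo (0:ℝ) 1 := by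
    rw [Ioo_union_Ico_eq_Ioo h01 h14.le, Ioo_union_Ico_eq_Ioo h04 h41.le]
  have hgrr : IntegrableOn (rr g) (Ioo (0:ℝ) 1) := by
    rw [← hsplit_sets]
    apply IntegrableOn.union
    apply IntegrableOn.union
    · exact ((hfrr.mono_set (Ioo_subset_Ioo le_rfl h11.le)).congr_fun
        (fun t ht => (P1 t ht.2.le).symm) measurableSet_Ioo)
    · exact integrableOn_rr_Ico hgm h01 h14.le h41
    · refine ((hfrr.mono_set ?_).congr_fun (fun t ht => (P2 t ht.1 ht.2).symm) measurableSet_Ico)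
      exact fun t ht => ⟨h04.trans_le ht.1, ht.2⟩
  -- disjointness facts
  have hdis1 : ∀ s : ℝ, Disjoint (Ioo (0:ℝ) s₁) (Ico s₁ s) := by
    intro s
    apply Set.disjoint_left.mpr
    rintro t ⟨_, ht2⟩ ⟨ht3, _⟩
    exact absurd ht3 (not_le.mpr ht2)
  have hdis2 : ∀ s : ℝ, Disjoint (Ioo (0:ℝ) s₄) (Ico s₄ s) := by
    intro s
    apply Set.disjoint_left.mpr
    rintro t ⟨_, ht2⟩ ⟨ht3, _⟩
    exact absurd ht3 (not_le.mpr ht2)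
  -- splitting of integrals
  have split2 : ∀ (φ : ℝ → ℝ), IntegrableOn φ (Ioo (0:ℝ) 1) → ∀ s, s₁ ≤ s → s ≤ 1 →
      (∫ t in Ioo (0:ℝ) s, φ t)
        = (∫ t in Ioo (0:ℝ) s₁, φ t) + ∫ t in Ico s₁ s, φ t := by
    intro φ hφ s hs1 hs2
    rw [← Ioo_union_Ico_eq_Ioo h01 hs1]
    apply setIntegral_union (hdis1 s) measurableSet_Ico
    · exact hφ.mono_set (Ioo_subset_Ioo le_rfl h11.le)
    · exact hφ.mono_set (fun t ht => ⟨h01.trans_le ht.1, lt_of_lt_of_le ht.2 hs2⟩)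
  have split3 : ∀ (φ : ℝ → ℝ), IntegrableOn φ (Ioo (0:ℝ) 1) → ∀ s, s₄ ≤ s → s ≤ 1 →
      (∫ t in Ioo (0:ℝ) s, φ t)
        = ((∫ t in Ioo (0:ℝ) s₁, φ t) + ∫ t in Ico s₁ s₄, φ t) + ∫ t in Ico s₄ s, φ t := by
    intro φ hφ s hs1 hs2
    rw [← Ioo_union_Ico_eq_Ioo h04 hs1, ← Ioo_union_Ico_eq_Ioo h01 h14.le]
    rw [setIntegral_union]
    · rw [setIntegral_union (hdis1 s₄) measurableSet_Ico]
      · exact hφ.mono_set (Ioo_subset_Ioo le_rfl h11.le)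
      · exact hφ.mono_set (fun t ht => ⟨h01.trans_le ht.1, ht.2.trans h41⟩)
    · rw [Ioo_union_Ico_eq_Ioo h01 h14.le]
      exact hdis2 s
    · exact measurableSet_Ico
    · rw [Ioo_union_Ico_eq_Ioo h01 h14.le]
      exact hφ.mono_set (Ioo_subset_Ioo le_rfl h41.le)
    · exact hφ.mono_set (fun t ht => ⟨h04.trans_le ht.1, lt_of_lt_of_le ht.2 hs2⟩)
  -- piecewise equalities
  have eqLeft : ∀ s, s ≤ s₁ → (∫ t in Ioo (0:ℝ) s, rr g t) = ∫ t in Ioo (0:ℝ) s, rr f t := by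
    intro s hs
    exact setIntegral_congr_fun measurableSet_Ioo (fun t ht => P1 t (ht.2.le.trans hs))
  have eqMid : (∫ t in Ico s₁ s₄, rr g t) = ∫ t in Ico s₁ s₄, rr f t := by
    rw [integral_Ico_eq_integral_Ioo, integral_Ico_eq_integral_Ioo]
    exact mid_eq hfm hgm hfi hgi h01 h14 h41 hw hβ hα hβα hzero
  have eqRight : ∀ s, s ≤ 1 → (∫ t in Ico s₄ s, rr g t) = ∫ t in Ico s₄ s, rr f t := by
    intro s hs
    apply setIntegral_congr_fun measurableSet_Ico
    intro t ht
    exact P2 t ht.1 (lt_of_lt_of_le ht.2 hs)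
  constructor
  · -- the partial-integral inequalities
    intro s hs
    rcases le_or_gt s s₁ with hcase | hcase
    · rw [eqLeft s hcase]
      exact hmaj.1 s hs
    rcases le_or_gt s s₄ with hcase2 | hcase2
    · -- middle region : use hbound
      have hr1 : rr g s₁ = rr f s₁ := P1 s₁ le_rfl
      have hIcoSub : Ico s₁ s ⊆ Ioo (0:ℝ) 1 :=
        fun t ht => ⟨h01.trans_le ht.1, lt_of_lt_of_le ht.2 (hcase2.trans h41.le)⟩
      have hgmono : ∀ t ∈ Ico s₁ s, rr g t ≤ rr f s₁ := by
        intro t ht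
        rw [← hr1]
        exact rr_antitoneOn hgm hs1I (hIcoSub ht) ht.1
      have hb1 : (∫ t in Ico s₁ s, rr g t) ≤ (s - s₁) * rr f s₁ := by
        have hmono := setIntegral_mono_on
          (hgrr.mono_set hIcoSub) (integrableOn_const (by
            rw [Real.volume_Ico]; exact ENNReal.ofReal_ne_top)) measurableSet_Ico hgmono
        calc (∫ t in Ico s₁ s, rr g t) ≤ ∫ _ in Ico s₁ s, rr f s₁ := hmono
          _ = (s - s₁) * rr f s₁ := by
              rw [setIntegral_const, measureReal_def, Real.volume_Ico, smul_eq_mul,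
                ENNReal.toReal_ofReal (by linarith : (0:ℝ) ≤ s - s₁)]
      calc (∫ t in Ioo (0:ℝ) s, rr g t)
          = (∫ t in Ioo (0:ℝ) s₁, rr g t) + ∫ t in Ico s₁ s, rr g t :=
            split2 (rr g) hgrr s hcase.le (hcase2.trans h41.le)
        _ = (∫ t in Ioo (0:ℝ) s₁, rr f t) + ∫ t in Ico s₁ s, rr g t := by
            rw [eqLeft s₁ le_rfl]
        _ ≤ (∫ t in Ioo (0:ℝ) s₁, rr f t) + (s - s₁) * rr f s₁ := by linarith
        _ ≤ ∫ t in Ioo (0:ℝ) s, rr y t := by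
            have := hbound s ⟨hcase.le, hcase2⟩
            linarith
    · -- right region
      rw [split3 (rr g) hgrr s hcase2.le hs.2.le, eqLeft s₁ le_rfl, eqMid, eqRight s hs.2.le,
        ← split3 (rr f) hfrr s hcase2.le hs.2.le]
      exact hmaj.1 s hs
  · -- total equality
    rw [split3 (rr g) hgrr 1 h41.le le_rfl, eqLeft s₁ le_rfl, eqMid, eqRight 1 le_rfl,
      ← split3 (rr f) hfrr 1 h41.le le_rfl]
    exact hmaj.2


end RRAux

open RRAux

theorem not_extreme_of_flat_bound (y x : ℝ → ℝ)
    (hy : IntegrableOn y (Ioo (0:ℝ) 1)) (hx : x ∈ Omega y)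
    (s₁ s₂ s₃ s₄ : ℝ)
    (h01 : 0 < s₁) (h12 : s₁ < s₂) (h23 : s₂ < s₃) (h34 : s₃ < s₄) (h41 : s₄ < 1)
    (hdrop : rr x s₂ < rr x s₁ ∧ rr x s₃ < rr x s₂ ∧ rr x s₄ < rr x s₃)
    (hbound : ∀ s ∈ Icc s₁ s₄,
      (∫ t in Ioo (0:ℝ) s₁, rr x t) + rr x s₁ * (s - s₁) ≤ ∫ t in Ioo (0:ℝ) s, rr y t) :
    ¬ ExtremePt (Omega y) x := by
  intro hext
  obtain ⟨-, hexts⟩ := hext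
  have hxi : IntegrableOn x (Ioo (0:ℝ) 1) := hx.1
  have haem : AEMeasurable x (volume.restrict (Ioo (0:ℝ) 1)) :=
    hxi.aestronglyMeasurable.aemeasurable
  set f := haem.mk x with hfdef
  have hfm : Measurable f := haem.measurable_mk
  have hae : x =ᵐ[volume.restrict (Ioo (0:ℝ) 1)] f := haem.ae_eq_mk
  have hrrx : rr x = rr f := rr_congr (fun c => dd_congr_ae hae c)
  have hfi : IntegrableOn f (Ioo (0:ℝ) 1) := hxi.congr hae
  rw [hrrx] at hdrop hbound
  have hmajf : Maj f y := by
    have := hx.2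
    unfold Maj at this ⊢
    rwa [hrrx] at this
  obtain ⟨hd12, hd23, hd34⟩ := hdrop
  set r₁ := rr f s₁ with hr₁
  set r₂ := rr f s₂ with hr₂
  set r₃ := rr f s₃ with hr₃
  set r₄ := rr f s₄ with hr₄
  set α' : ℝ := (r₁ + r₂)/2 with hα'
  set α : ℝ := (r₁ + 3*r₂)/4 with hαd
  set γ : ℝ := (r₂ + r₃)/2 with hγd
  set β : ℝ := (r₃ + r₄)/2 with hβd
  set β' : ℝ := (r₃ + 3*r₄)/4 with hβ'
  -- chain of inequalities
  have hc1 : r₄ < β' := by rw [hβ']; linarith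
  have hc2 : β' < β := by rw [hβ', hβd]; linarith
  have hc3 : β < r₃ := by rw [hβd]; linarith
  have hc4 : r₃ < γ := by rw [hγd]; linarith
  have hc5 : γ < r₂ := by rw [hγd]; linarith
  have hc6 : r₂ < α := by rw [hαd]; linarith
  have hc7 : α < α' := by rw [hαd, hα']; linarith
  have hc8 : α' < r₁ := by rw [hα']; linarith
  have hβ'γ : β' < γ := by rw [hβ', hγd]; linarith
  have hγα' : γ < α' := by rw [hγd, hα']; linarith
  -- distribution function facts
  have h02 : (0:ℝ) < s₂ := h01.trans h12
  have h03 : (0:ℝ) < s₃ := h02.trans h23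
  have h21 : s₂ < 1 := h23.trans (h34.trans h41)
  have h31 : s₃ < 1 := h34.trans h41
  have dα : dd f α ≤ ENNReal.ofReal s₂ := dd_le_of_rr_lt (SS_nonempty hfm h02) hc6
  have dγ1 : ENNReal.ofReal s₂ < dd f γ := ofReal_lt_dd_of_lt_rr (SS_bddBelow h21) hc5
  have dγ2 : dd f γ ≤ ENNReal.ofReal s₃ := dd_le_of_rr_lt (SS_nonempty hfm h03) hc4
  have dβ : ENNReal.ofReal s₃ < dd f β := ofReal_lt_dd_of_lt_rr (SS_bddBelow h31) hc3
  -- the sets A and B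
  set A : Set ℝ := Ioo (0:ℝ) 1 ∩ f ⁻¹' (Ioc γ α) with hAdef
  set B : Set ℝ := Ioo (0:ℝ) 1 ∩ f ⁻¹' (Ioc β γ) with hBdef
  have hAm : MeasurableSet A := measurableSet_Ioo.inter (hfm measurableSet_Ioc)
  have hBm : MeasurableSet B := measurableSet_Ioo.inter (hfm measurableSet_Ioc)
  have hAsub : A ⊆ Ioo (0:ℝ) 1 := inter_subset_left
  have hBsub : B ⊆ Ioo (0:ℝ) 1 := inter_subset_left
  -- measure identities
  have hsplitA : {u ∈ Ioo (0:ℝ) 1 | γ < f u} = A ∪ {u ∈ Ioo (0:ℝ) 1 | α < f u} := by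
    ext u
    simp only [mem_setOf_eq, hAdef, mem_union, mem_inter_iff, mem_preimage, mem_Ioc]
    constructor
    · rintro ⟨hu, hγu⟩
      rcases le_or_gt (f u) α with hle | hlt
      · exact Or.inl ⟨hu, hγu, hle⟩
      · exact Or.inr ⟨hu, hlt⟩
    · rintro (⟨hu, hγu, _⟩ | ⟨hu, hαu⟩)
      · exact ⟨hu, hγu⟩
      · exact ⟨hu, hc5.trans (hc6.trans hαu)⟩
  have hdisA : Disjoint A {u ∈ Ioo (0:ℝ) 1 | α < f u} := by
    apply Set.disjoint_left.mpr
    rintro u ⟨_, _, hu2⟩ ⟨_, hu3⟩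
    exact absurd hu3 (not_lt.mpr hu2)
  have hmeasA : dd f γ = volume A + dd f α := by
    rw [dd, dd, hsplitA]
    exact measure_union hdisA (sep_lt_measurable hfm α)
  have hsplitB : {u ∈ Ioo (0:ℝ) 1 | β < f u} = B ∪ {u ∈ Ioo (0:ℝ) 1 | γ < f u} := by
    ext u
    simp only [mem_setOf_eq, hBdef, mem_union, mem_inter_iff, mem_preimage, mem_Ioc]
    constructor
    · rintro ⟨hu, hβu⟩
      rcases le_or_gt (f u) γ with hle | hlt
      · exact Or.inl ⟨hu, hβu, hle⟩
      · exact Or.inr ⟨hu, hlt⟩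
    · rintro (⟨hu, hβu, _⟩ | ⟨hu, hγu⟩)
      · exact ⟨hu, hβu⟩
      · exact ⟨hu, (hc3.trans hc4).trans hγu⟩
  have hdisB : Disjoint B {u ∈ Ioo (0:ℝ) 1 | γ < f u} := by
    apply Set.disjoint_left.mpr
    rintro u ⟨_, _, hu2⟩ ⟨_, hu3⟩
    exact absurd hu3 (not_lt.mpr hu2)
  have hmeasB : dd f β = volume B + dd f γ := by
    rw [dd, dd, hsplitB]
    exact measure_union hdisB (sep_lt_measurable hfm γ)
  have hmA0 : volume A ≠ 0 := by
    intro h0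
    rw [h0, zero_add] at hmeasA
    exact absurd (hmeasA ▸ dα) (not_le.mpr dγ1)
  have hmB0 : volume B ≠ 0 := by
    intro h0
    rw [h0, zero_add] at hmeasB
    exact absurd (hmeasB ▸ dγ2) (not_le.mpr dβ)
  have hmAtop : volume A ≠ ⊤ := by
    refine ne_top_of_le_ne_top ENNReal.one_ne_top ?_
    calc volume A ≤ volume (Ioo (0:ℝ) 1) := measure_mono hAsub
      _ = 1 := by rw [Real.volume_Ioo]; norm_num
  have hmBtop : volume B ≠ ⊤ := by
    refine ne_top_of_le_ne_top ENNReal.one_ne_top ?_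
    calc volume B ≤ volume (Ioo (0:ℝ) 1) := measure_mono hBsub
      _ = 1 := by rw [Real.volume_Ioo]; norm_num
  set mAr := (volume A).toReal with hmArdef
  set mBr := (volume B).toReal with hmBrdef
  have hmAr : 0 < mAr := ENNReal.toReal_pos hmA0 hmAtop
  have hmBr : 0 < mBr := ENNReal.toReal_pos hmB0 hmBtop
  -- the perturbation size
  set ε : ℝ := min (min (α' - α) (γ - β')) (min ((β - β') * mBr / mAr) ((α' - γ) * mBr / mAr))
    with hεdef
  have hε : 0 < ε := by
    apply lt_min (lt_min (by linarith) (by linarith))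
    apply lt_min
    · apply div_pos (mul_pos (by linarith) hmBr) hmAr
    · apply div_pos (mul_pos (by linarith) hmBr) hmAr
  set δ : ℝ := ε * mAr / mBr with hδdef
  have hδ : 0 < δ := div_pos (mul_pos hε hmAr) hmBr
  have hεα : ε ≤ α' - α := (min_le_left _ _).trans (min_le_left _ _)
  have hεγ : ε ≤ γ - β' := (min_le_left _ _).trans (min_le_right _ _)
  have hδβ : δ ≤ β - β' := by
    have h2 : ε ≤ (β - β') * mBr / mAr := (min_le_right _ _).trans (min_le_left _ _)
    rw [le_div_iff₀ hmAr] at h2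
    rw [hδdef, div_le_iff₀ hmBr]
    linarith
  have hδα : δ ≤ α' - γ := by
    have h2 : ε ≤ (α' - γ) * mBr / mAr := (min_le_right _ _).trans (min_le_right _ _)
    rw [le_div_iff₀ hmAr] at h2
    rw [hδdef, div_le_iff₀ hmBr]
    linarith
  have hδmul : δ * mBr = ε * mAr := by
    rw [hδdef]
    exact div_mul_cancel₀ _ (ne_of_gt hmBr)
  -- the perturbation
  set h : ℝ → ℝ := fun u => A.indicator (fun _ => ε) u + B.indicator (fun _ => -δ) u with hhdef
  have hhm : Measurable h :=
    (measurable_const.indicator hAm).add (measurable_const.indicator hBm)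
  set g₁ : ℝ → ℝ := fun u => f u + h u with hg₁def
  set g₂ : ℝ → ℝ := fun u => f u - h u with hg₂def
  have hg₁m : Measurable g₁ := hfm.add hhm
  have hg₂m : Measurable g₂ := hfm.sub hhm
  have hABdis : ∀ u, u ∈ A → u ∉ B := by
    rintro u ⟨_, huγ, huα⟩ ⟨_, huβ, huγ'⟩
    exact absurd huγ (not_lt.mpr huγ')
  have hBAdis : ∀ u, u ∈ B → u ∉ A := by
    rintro u ⟨_, huβ, huγ'⟩ ⟨_, huγ, huα⟩
    exact absurd huγ (not_lt.mpr huγ')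
  have hhA : ∀ u, u ∈ A → h u = ε := by
    intro u hu
    rw [hhdef]
    simp only [indicator_of_mem hu, indicator_of_notMem (hABdis u hu), add_zero]
  have hhB : ∀ u, u ∈ B → h u = -δ := by
    intro u hu
    rw [hhdef]
    simp only [indicator_of_mem hu, indicator_of_notMem (hBAdis u hu), zero_add]
  have hh0 : ∀ u, u ∉ A → u ∉ B → h u = 0 := by
    intro u huA huB
    rw [hhdef]
    simp only [indicator_of_notMem huA, indicator_of_notMem huB, add_zero]
  have hg1u : ∀ u, g₁ u = f u + h u := fun u => rfl
  have hg2u : ∀ u, g₂ u = f u - h u := fun u => rfl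
  -- window facts
  have hwin1 : Win f g₁ β' α' := by
    intro u
    by_cases hA : u ∈ A
    · obtain ⟨-, hfu1, hfu2⟩ := id hA
      right
      rw [hg1u u, hhA u hA]
      refine ⟨by linarith, by linarith, by linarith, by linarith⟩
    by_cases hB : u ∈ B
    · obtain ⟨-, hfu1, hfu2⟩ := id hB
      right
      rw [hg1u u, hhB u hB]
      refine ⟨by linarith, by linarith, by linarith, by linarith⟩
    · left
      rw [hg1u u, hh0 u hA hB, add_zero]
  have hwin2 : Win f g₂ β' α' := by
    intro u
    by_cases hA : u ∈ A
    · obtain ⟨-, hfu1, hfu2⟩ := id hA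
      right
      rw [hg2u u, hhA u hA]
      refine ⟨by linarith, by linarith, by linarith, by linarith⟩
    by_cases hB : u ∈ B
    · obtain ⟨-, hfu1, hfu2⟩ := id hB
      right
      rw [hg2u u, hhB u hB]
      refine ⟨by linarith, by linarith, by linarith, by linarith⟩
    · left
      rw [hg2u u, hh0 u hA hB, sub_zero]
  -- integrability
  have hhi : IntegrableOn h (Ioo (0:ℝ) 1) := by
    refine Integrable.mono' (integrable_const (max ε δ)) hhm.aestronglyMeasurable ?_
    apply Filter.Eventually.of_forall
    intro u
    rw [Real.norm_eq_abs]
    by_cases hA : u ∈ A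
    · rw [hhA u hA, abs_of_pos hε]; exact le_max_left _ _
    by_cases hB : u ∈ B
    · rw [hhB u hB, abs_neg, abs_of_pos hδ]; exact le_max_right _ _
    · rw [hh0 u hA hB, abs_zero]
      exact le_trans hε.le (le_max_left _ _)
  have hg₁i : IntegrableOn g₁ (Ioo (0:ℝ) 1) := hfi.add hhi
  have hg₂i : IntegrableOn g₂ (Ioo (0:ℝ) 1) := hfi.sub hhi
  -- the integral of h vanishes
  have hrestrA : (volume.restrict (Ioo (0:ℝ) 1)) A = volume A := by
    rw [Measure.restrict_apply hAm, inter_eq_self_of_subset_left hAsub]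
  have hrestrB : (volume.restrict (Ioo (0:ℝ) 1)) B = volume B := by
    rw [Measure.restrict_apply hBm, inter_eq_self_of_subset_left hBsub]
  have hint_h : (∫ u in Ioo (0:ℝ) 1, h u) = 0 := by
    rw [hhdef]
    rw [integral_add ((integrable_const ε).indicator hAm) ((integrable_const (-δ)).indicator hBm)]
    rw [integral_indicator_const _ hAm, integral_indicator_const _ hBm, measureReal_def, measureReal_def, hrestrA, hrestrB]
    simp only [smul_eq_mul, ← hmArdef, ← hmBrdef]
    linarith [hδmul]
  have hzero1 : (∫ u in Ioo (0:ℝ) 1, (g₁ u - f u)) = 0 := by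
    have heq1 : (fun u => g₁ u - f u) = h := by
      funext u; rw [hg1u u]; ring
    rw [heq1, hint_h]
  have hzero2 : (∫ u in Ioo (0:ℝ) 1, (g₂ u - f u)) = 0 := by
    have heq2 : (fun u => g₂ u - f u) = fun u => -(h u) := by
      funext u; rw [hg2u u]; ring
    rw [heq2, integral_neg, hint_h, neg_zero]
  -- membership in Omega
  have h14 : s₁ < s₄ := h12.trans (h23.trans h34)
  have hβ'r : rr f s₄ < β' := hc1
  have hα'r : α' < rr f s₁ := hc8
  have hβα' : β' ≤ α' := by linarith
  have hg₁mem : g₁ ∈ Omega y :=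
    ⟨hg₁i, maj_perturbed hfm hg₁m hfi hg₁i h01 h14 h41 hwin1 hβ'r hα'r hβα' hzero1 hmajf hbound⟩
  have hg₂mem : g₂ ∈ Omega y :=
    ⟨hg₂i, maj_perturbed hfm hg₂m hfi hg₂i h01 h14 h41 hwin2 hβ'r hα'r hβα' hzero2 hmajf hbound⟩
  -- the average property
  have havg : ∀ᵐ u ∂(volume.restrict (Ioo (0:ℝ) 1)), x u = (g₁ u + g₂ u) / 2 := by
    filter_upwards [hae] with u hu
    rw [hg₁def, hg₂def, hu]
    ring
  have heq := hexts g₁ hg₁mem g₂ hg₂mem havg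
  -- contradiction : g₁ ≠ g₂ on A which has positive measure
  have hne : (volume.restrict (Ioo (0:ℝ) 1)) {u | ¬ g₁ u = g₂ u} = 0 := ae_iff.mp heq
  rw [Measure.restrict_apply' measurableSet_Ioo] at hne
  apply hmA0
  apply measure_mono_null ?_ hne
  intro u huA
  refine ⟨?_, hAsub huA⟩
  simp only [mem_setOf_eq]
  rw [hg1u u, hg2u u, hhA u huA]
  intro habs
  have : ε = 0 := by linarith
  exact absurd this (ne_of_gt hε)
end

section
/- Let f : (0,1) → ℝ be integrable and let A ⊂ (0,1) be measurable with m(A) = s ∈ (0,1) such that its indicator χ_A satisfies ∫ f·χ_A dm = ∫₀ˢ λ(t; f) dt. Then, up to null sets, {f > λ(s; f)} ⊆ A ⊆ {f ≥ λ(s; f)}. -/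
open MeasureTheory Set

namespace OptSandwichAux

open scoped ENNReal

/-- The distribution function of `g` on `(0,1)`. -/
noncomputable def dd (g : ℝ → ℝ) (y : ℝ) : ℝ≥0∞ :=
  volume {u ∈ Ioo (0:ℝ) 1 | y < g u}

lemma dd_anti (g : ℝ → ℝ) : Antitone (dd g) :=
  fun _ _ h => measure_mono fun u hu => ⟨hu.1, lt_of_le_of_lt h hu.2⟩

lemma dd_le_one (g : ℝ → ℝ) (y : ℝ) : dd g y ≤ 1 := by
  have h1 : dd g y ≤ volume (Ioo (0:ℝ) 1) := measure_mono (sep_subset _ _)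
  simpa [Real.volume_Ioo] using h1

lemma dd_ne_top (g : ℝ → ℝ) (y : ℝ) : dd g y ≠ ∞ :=
  ne_top_of_le_ne_top ENNReal.one_ne_top (dd_le_one g y)

lemma dd_right_cont (g : ℝ → ℝ) (y : ℝ) :
    dd g y = ⨆ n : ℕ, dd g (y + 1/(n+1)) := by
  have hmono : Monotone fun n : ℕ => {u ∈ Ioo (0:ℝ) 1 | y + 1/(n+1 : ℝ) < g u} := by
    intro n m hnm u hu
    refine ⟨hu.1, lt_of_le_of_lt ?_ hu.2⟩
    have h1 : (1:ℝ)/(m+1) ≤ 1/(n+1) := by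
      apply one_div_le_one_div_of_le
      · positivity
      · have := (Nat.cast_le (α := ℝ)).mpr hnm; linarith
    linarith
  have hU : {u ∈ Ioo (0:ℝ) 1 | y < g u}
      = ⋃ n : ℕ, {u ∈ Ioo (0:ℝ) 1 | y + 1/(n+1 : ℝ) < g u} := by
    ext u
    simp only [mem_iUnion, mem_sep_iff]
    constructor
    · rintro ⟨hI, hy⟩
      obtain ⟨n, hn⟩ := exists_nat_one_div_lt (show (0:ℝ) < g u - y by linarith)
      exact ⟨n, hI, by linarith⟩
    · rintro ⟨n, hI, hn⟩
      have hpos : (0:ℝ) < 1/(n+1) := by positivity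
      exact ⟨hI, by linarith⟩
  unfold dd
  rw [hU, hmono.measure_iUnion]

lemma dd_markov {g : ℝ → ℝ} (hg : Measurable g) (r : ℝ) :
    ENNReal.ofReal r * dd g r ≤ ∫⁻ u in Ioo (0:ℝ) 1, ENNReal.ofReal |g u| := by
  have hmbl : Measurable fun u => ENNReal.ofReal |g u| := hg.abs.ennreal_ofReal
  have h1 : dd g r
      ≤ (volume.restrict (Ioo (0:ℝ) 1)) {u | ENNReal.ofReal r ≤ ENNReal.ofReal |g u|} := by
    rw [Measure.restrict_apply (measurableSet_le measurable_const hmbl)]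
    refine measure_mono fun u hu => ?_
    exact ⟨ENNReal.ofReal_le_ofReal (hu.2.le.trans (le_abs_self _)), hu.1⟩
  calc ENNReal.ofReal r * dd g r
      ≤ ENNReal.ofReal r
        * (volume.restrict (Ioo (0:ℝ) 1)) {u | ENNReal.ofReal r ≤ ENNReal.ofReal |g u|} :=
        mul_le_mul_right h1 _
    _ ≤ ∫⁻ u in Ioo (0:ℝ) 1, ENNReal.ofReal |g u| :=
        mul_meas_ge_le_lintegral₀ hmbl.aemeasurable _

lemma dd_markov_neg {g : ℝ → ℝ} (hg : Measurable g) (r : ℝ) :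
    ENNReal.ofReal (-r) * volume {u ∈ Ioo (0:ℝ) 1 | g u ≤ r}
      ≤ ∫⁻ u in Ioo (0:ℝ) 1, ENNReal.ofReal |g u| := by
  have hmbl : Measurable fun u => ENNReal.ofReal |g u| := hg.abs.ennreal_ofReal
  have h1 : volume {u ∈ Ioo (0:ℝ) 1 | g u ≤ r}
      ≤ (volume.restrict (Ioo (0:ℝ) 1)) {u | ENNReal.ofReal (-r) ≤ ENNReal.ofReal |g u|} := by
    rw [Measure.restrict_apply (measurableSet_le measurable_const hmbl)]
    refine measure_mono fun u hu => ?_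
    refine ⟨ENNReal.ofReal_le_ofReal ?_, hu.1⟩
    calc -r ≤ -(g u) := by linarith [hu.2]
      _ ≤ |g u| := neg_le_abs _
  calc ENNReal.ofReal (-r) * volume {u ∈ Ioo (0:ℝ) 1 | g u ≤ r}
      ≤ ENNReal.ofReal (-r)
        * (volume.restrict (Ioo (0:ℝ) 1)) {u | ENNReal.ofReal (-r) ≤ ENNReal.ofReal |g u|} :=
        mul_le_mul_right h1 _
    _ ≤ ∫⁻ u in Ioo (0:ℝ) 1, ENNReal.ofReal |g u| :=
        mul_meas_ge_le_lintegral₀ hmbl.aemeasurable _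

lemma S_nonempty {g : ℝ → ℝ} (hg : Measurable g)
    (hfin : (∫⁻ u in Ioo (0:ℝ) 1, ENNReal.ofReal |g u|) ≠ ∞) {t : ℝ} (ht : 0 < t) :
    ∃ r : ℝ, dd g r ≤ ENNReal.ofReal t := by
  set K := ∫⁻ u in Ioo (0:ℝ) 1, ENNReal.ofReal |g u| with hKdef
  have hK0 : (0:ℝ) ≤ K.toReal := ENNReal.toReal_nonneg
  set r : ℝ := K.toReal / t + 1 with hrdef
  have hr0 : 0 < r := by positivity
  refine ⟨r, ?_⟩
  have hm := dd_markov hg r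
  have hre0 : ENNReal.ofReal r ≠ 0 := by
    simp only [ne_eq, ENNReal.ofReal_eq_zero, not_le]
    exact hr0
  have h2 : dd g r ≤ K / ENNReal.ofReal r := by
    rw [ENNReal.le_div_iff_mul_le (Or.inl hre0) (Or.inl ENNReal.ofReal_ne_top)]
    rw [mul_comm]
    exact hm
  refine h2.trans ?_
  rw [ENNReal.div_le_iff_le_mul (Or.inl hre0) (Or.inl ENNReal.ofReal_ne_top)]
  calc K = ENNReal.ofReal K.toReal := (ENNReal.ofReal_toReal hfin).symm
    _ ≤ ENNReal.ofReal (t * r) := by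
        apply ENNReal.ofReal_le_ofReal
        have : t * r = K.toReal + t := by
          rw [hrdef]; field_simp
        linarith
    _ = ENNReal.ofReal t * ENNReal.ofReal r := ENNReal.ofReal_mul ht.le

lemma S_bddBelow {g : ℝ → ℝ} (hg : Measurable g)
    (hfin : (∫⁻ u in Ioo (0:ℝ) 1, ENNReal.ofReal |g u|) ≠ ∞) {t : ℝ}
    (ht0 : 0 ≤ t) (ht1 : t < 1) :
    BddBelow {r : ℝ | dd g r ≤ ENNReal.ofReal t} := by
  set K := ∫⁻ u in Ioo (0:ℝ) 1, ENNReal.ofReal |g u| with hKdef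
  refine ⟨min 0 (-(K.toReal / (1 - t))), fun r hr => ?_⟩
  rcases le_or_gt 0 r with h0 | h0
  · exact le_trans (min_le_left _ _) h0
  · refine le_trans (min_le_right _ _) ?_
    have hEmeas : MeasurableSet {u ∈ Ioo (0:ℝ) 1 | r < g u} :=
      measurableSet_Ioo.inter (measurableSet_lt measurable_const hg)
    have hset : {u ∈ Ioo (0:ℝ) 1 | g u ≤ r}
        = Ioo (0:ℝ) 1 \ {u ∈ Ioo (0:ℝ) 1 | r < g u} := by
      ext u
      simp only [mem_sep_iff, mem_diff, not_and, not_lt]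
      constructor
      · rintro ⟨hI, hle⟩; exact ⟨hI, fun _ => hle⟩
      · rintro ⟨hI, hle⟩; exact ⟨hI, hle hI⟩
    have hvol : volume {u ∈ Ioo (0:ℝ) 1 | g u ≤ r} = 1 - dd g r := by
      rw [hset, measure_diff (sep_subset _ _) hEmeas.nullMeasurableSet (dd_ne_top g r),
        Real.volume_Ioo]
      norm_num
      rfl
    have hlow : ENNReal.ofReal (1 - t) ≤ volume {u ∈ Ioo (0:ℝ) 1 | g u ≤ r} := by
      rw [hvol, ENNReal.ofReal_sub 1 ht0, ENNReal.ofReal_one]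
      exact tsub_le_tsub_left hr _
    have hm := dd_markov_neg hg r
    have hmul : ENNReal.ofReal (-r) * ENNReal.ofReal (1 - t) ≤ K :=
      le_trans (mul_le_mul_right hlow _) hm
    rw [← ENNReal.ofReal_mul (by linarith)] at hmul
    have hreal : -r * (1 - t) ≤ K.toReal := by
      have := ENNReal.toReal_mono hfin hmul
      rwa [ENNReal.toReal_ofReal (by nlinarith)] at this
    have : -r ≤ K.toReal / (1 - t) := by
      rw [le_div_iff₀ (by linarith)]
      linarith
    linarith

lemma rr_le_iff {g : ℝ → ℝ} (hg : Measurable g)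
    (hfin : (∫⁻ u in Ioo (0:ℝ) 1, ENNReal.ofReal |g u|) ≠ ∞) {t y : ℝ}
    (ht : t ∈ Ioo (0:ℝ) 1) :
    rr g t ≤ y ↔ dd g y ≤ ENNReal.ofReal t := by
  have hS : rr g t = sInf {r : ℝ | dd g r ≤ ENNReal.ofReal t} := rfl
  constructor
  · intro h
    rw [dd_right_cont]
    refine iSup_le fun n => ?_
    have hpos : (0:ℝ) < 1/(n+1) := by positivity
    have hlt : sInf {r : ℝ | dd g r ≤ ENNReal.ofReal t} < y + 1/(n+1) := by
      rw [← hS]; linarith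
    obtain ⟨r, hrS, hry⟩ := exists_lt_of_csInf_lt (S_nonempty hg hfin ht.1) hlt
    exact le_trans (dd_anti g hry.le) hrS
  · intro h
    rw [hS]
    exact csInf_le (S_bddBelow hg hfin ht.1.le ht.2) h

lemma lt_rr_iff {g : ℝ → ℝ} (hg : Measurable g)
    (hfin : (∫⁻ u in Ioo (0:ℝ) 1, ENNReal.ofReal |g u|) ≠ ∞) {t y : ℝ}
    (ht : t ∈ Ioo (0:ℝ) 1) :
    y < rr g t ↔ ENNReal.ofReal t < dd g y := by
  rw [← not_le, ← not_le, rr_le_iff hg hfin ht]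

lemma lt_rr_iff' {g : ℝ → ℝ} (hg : Measurable g)
    (hfin : (∫⁻ u in Ioo (0:ℝ) 1, ENNReal.ofReal |g u|) ≠ ∞) {t y : ℝ}
    (ht : t ∈ Ioo (0:ℝ) 1) :
    y < rr g t ↔ t < (dd g y).toReal := by
  rw [lt_rr_iff hg hfin ht, ENNReal.ofReal_lt_iff_lt_toReal ht.1.le (dd_ne_top g y)]

lemma rr_anti {g : ℝ → ℝ} (hg : Measurable g)
    (hfin : (∫⁻ u in Ioo (0:ℝ) 1, ENNReal.ofReal |g u|) ≠ ∞) {t t' : ℝ}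
    (ht : t ∈ Ioo (0:ℝ) 1) (ht' : t' ∈ Ioo (0:ℝ) 1) (h : t ≤ t') :
    rr g t' ≤ rr g t := by
  by_contra hcon
  push_neg at hcon
  have h1 : ENNReal.ofReal t' < dd g (rr g t) := (lt_rr_iff hg hfin ht').mp hcon
  have h2 : dd g (rr g t) ≤ ENNReal.ofReal t := by
    by_contra h2
    push_neg at h2
    exact lt_irrefl _ ((lt_rr_iff hg hfin ht).mpr h2)
  exact absurd (h1.trans_le (h2.trans (ENNReal.ofReal_le_ofReal h))) (lt_irrefl _)

lemma dd_toReal_le_one (g : ℝ → ℝ) (y : ℝ) : (dd g y).toReal ≤ 1 := by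
  simpa using ENNReal.toReal_mono ENNReal.one_ne_top (dd_le_one g y)

lemma lam_measurable {g : ℝ → ℝ} (hg : Measurable g)
    (hfin : (∫⁻ u in Ioo (0:ℝ) 1, ENNReal.ofReal |g u|) ≠ ∞) :
    Measurable (fun t => if t ∈ Ioo (0:ℝ) 1 then rr g t else 0) := by
  apply measurable_of_Ioi
  intro y
  rcases le_or_gt 0 y with hy | hy
  · have hpre : (fun t => if t ∈ Ioo (0:ℝ) 1 then rr g t else 0) ⁻¹' Ioi y
        = Ioo (0:ℝ) 1 ∩ Iio ((dd g y).toReal) := by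
      ext t
      simp only [mem_preimage, mem_Ioi, mem_inter_iff, mem_Iio]
      by_cases hI : t ∈ Ioo (0:ℝ) 1
      · simp only [if_pos hI, hI, true_and]
        exact lt_rr_iff' hg hfin hI
      · simp only [if_neg hI, hI, false_and, iff_false, not_lt]
        exact hy
    rw [hpre]
    exact measurableSet_Ioo.inter measurableSet_Iio
  · have hpre : (fun t => if t ∈ Ioo (0:ℝ) 1 then rr g t else 0) ⁻¹' Ioi y
        = (Ioo (0:ℝ) 1 ∩ Iio ((dd g y).toReal)) ∪ (Ioo (0:ℝ) 1)ᶜ := by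
      ext t
      simp only [mem_preimage, mem_Ioi, mem_union, mem_inter_iff, mem_Iio, mem_compl_iff]
      by_cases hI : t ∈ Ioo (0:ℝ) 1
      · simp only [if_pos hI, hI, true_and, not_true, or_false]
        exact lt_rr_iff' hg hfin hI
      · simp only [if_neg hI, hI, false_and, false_or, not_false_iff, iff_true]
        exact hy
    rw [hpre]
    exact (measurableSet_Ioo.inter measurableSet_Iio).union measurableSet_Ioo.compl

end OptSandwichAux

open OptSandwichAux
open scoped ENNReal

theorem optimal_set_sandwich (f : ℝ → ℝ) (hf : IntegrableOn f (Ioo (0:ℝ) 1))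
    (s : ℝ) (hs : s ∈ Ioo (0:ℝ) 1)
    (A : Set ℝ) (hA : MeasurableSet A) (hAsub : A ⊆ Ioo (0:ℝ) 1)
    (hAm : volume A = ENNReal.ofReal s)
    (hopt : (∫ u in A, f u) = ∫ t in Ioo (0:ℝ) s, rr f t) :
    volume ({u ∈ Ioo (0:ℝ) 1 | rr f s < f u} \ A) = 0 ∧
      volume (A \ {u ∈ Ioo (0:ℝ) 1 | rr f s ≤ f u}) = 0 := by
  obtain ⟨hs0, hs1⟩ := hs
  have hmeasI : MeasurableSet (Ioo (0:ℝ) 1) := measurableSet_Ioo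
  have hfae := hf.aestronglyMeasurable
  set μ := volume.restrict (Ioo (0:ℝ) 1) with hμdef
  set g : ℝ → ℝ := hfae.mk f with hgdef
  have hg : Measurable g := hfae.stronglyMeasurable_mk.measurable
  have hfg : f =ᵐ[μ] g := hfae.ae_eq_mk
  have hgi : Integrable g μ := hf.congr hfg
  have hfin : (∫⁻ u in Ioo (0:ℝ) 1, ENNReal.ofReal |g u|) ≠ ∞ := by
    have h1 : (∫⁻ u, (‖g u‖₊ : ℝ≥0∞) ∂μ) < ∞ := hgi.2
    refine ne_of_lt (lt_of_eq_of_lt ?_ h1)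
    exact lintegral_congr fun u => (Real.enorm_eq_ofReal_abs _).symm
  have hNull : ∀ᵐ u ∂volume, u ∈ Ioo (0:ℝ) 1 → f u = g u := (ae_restrict_iff' hmeasI).mp hfg
  have hdeq : ∀ y : ℝ, volume {u ∈ Ioo (0:ℝ) 1 | y < f u} = dd g y := by
    intro y
    apply measure_congr
    rw [Filter.eventuallyEq_set]
    filter_upwards [hNull] with u hu
    constructor
    · rintro ⟨h1, h2⟩; exact ⟨h1, by rwa [← hu h1]⟩
    · rintro ⟨h1, h2⟩; exact ⟨h1, by rwa [hu h1]⟩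
  have hrrg : rr f = rr g := by
    funext t
    unfold rr
    congr 1
    ext r
    rw [mem_setOf_eq, mem_setOf_eq, hdeq r]
    exact Iff.rfl
  set c : ℝ := rr f s with hcdef
  have hcg : rr g s = c := by rw [hcdef, hrrg]
  have hsmem : s ∈ Ioo (0:ℝ) 1 := ⟨hs0, hs1⟩
  set lam : ℝ → ℝ := fun t => if t ∈ Ioo (0:ℝ) 1 then rr g t else 0 with hlamdef
  have hlam : Measurable lam := lam_measurable hg hfin
  -- integrabilities
  have hIfin : volume (Ioo (0:ℝ) 1) < ∞ := by
    rw [Real.volume_Ioo]; exact ENNReal.ofReal_lt_top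
  have hconstI : IntegrableOn (fun _ : ℝ => c) (Ioo (0:ℝ) 1) volume :=
    (integrableOn_const_iff).mpr (Or.inr hIfin)
  have hposf_int : Integrable (fun u => max (f u - c) 0) μ := (hf.sub hconstI).pos_part
  have hposg_int : Integrable (fun u => max (g u - c) 0) μ :=
    hposf_int.congr (by filter_upwards [hfg] with u hu; rw [hu])
  -- layer cake : equality of lintegrals of positive parts
  have hmg : Measurable fun u => max (g u - c) 0 :=
    (hg.sub measurable_const).max measurable_const
  have hml : Measurable fun t => max (lam t - c) 0 :=
    (hlam.sub measurable_const).max measurable_const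
  have hlint_eq : (∫⁻ u in Ioo (0:ℝ) 1, ENNReal.ofReal (max (g u - c) 0))
      = ∫⁻ t in Ioo (0:ℝ) 1, ENNReal.ofReal (max (lam t - c) 0) := by
    have lg := lintegral_eq_lintegral_meas_lt (f := fun u => max (g u - c) 0) μ
      (Filter.Eventually.of_forall fun u => le_max_right _ _) hmg.aemeasurable
    have ll := lintegral_eq_lintegral_meas_lt (f := fun t => max (lam t - c) 0) μ
      (Filter.Eventually.of_forall fun t => le_max_right _ _) hml.aemeasurable
    show (∫⁻ u, ENNReal.ofReal (max (g u - c) 0) ∂μ)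
        = ∫⁻ t, ENNReal.ofReal (max (lam t - c) 0) ∂μ
    rw [lg, ll]
    apply lintegral_congr_ae
    refine (ae_restrict_iff' measurableSet_Ioi).mpr (Filter.Eventually.of_forall fun y hy => ?_)
    have hy0 : (0:ℝ) < y := hy
    show μ {a | y < max (g a - c) 0} = μ {a | y < max (lam a - c) 0}
    have hLg : μ {a | y < max (g a - c) 0} = dd g (c + y) := by
      rw [hμdef, Measure.restrict_apply (measurableSet_lt measurable_const hmg)]
      have hseteq : {a | y < max (g a - c) 0} ∩ Ioo (0:ℝ) 1
          = {u ∈ Ioo (0:ℝ) 1 | c + y < g u} := by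
        ext u
        simp only [mem_inter_iff, mem_setOf_eq, mem_sep_iff, lt_max_iff]
        constructor
        · rintro ⟨hmax, hI⟩
          rcases hmax with h | h
          · exact ⟨hI, by linarith⟩
          · exact absurd h (by linarith)
        · rintro ⟨hI, hcy⟩
          exact ⟨Or.inl (by linarith), hI⟩
      rw [hseteq]
      rfl
    have hLl : μ {a | y < max (lam a - c) 0} = dd g (c + y) := by
      rw [hμdef, Measure.restrict_apply (measurableSet_lt measurable_const hml)]
      have hseteq : {a | y < max (lam a - c) 0} ∩ Ioo (0:ℝ) 1
          = Ioo (0:ℝ) ((dd g (c + y)).toReal) := by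
        ext t
        simp only [mem_inter_iff, mem_setOf_eq, lt_max_iff, mem_Ioo]
        constructor
        · rintro ⟨hmax, ht0, ht1⟩
          have hI : t ∈ Ioo (0:ℝ) 1 := ⟨ht0, ht1⟩
          rcases hmax with h | h
          · have hcy : c + y < rr g t := by
              rw [hlamdef] at h
              simp only [if_pos hI] at h
              linarith
            exact ⟨ht0, (lt_rr_iff' hg hfin hI).mp hcy⟩
          · exact absurd h (by linarith)
        · rintro ⟨ht0, htd⟩
          have ht1 : t < 1 := lt_of_lt_of_le htd (dd_toReal_le_one g _)
          have hI : t ∈ Ioo (0:ℝ) 1 := ⟨ht0, ht1⟩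
          have hcy : c + y < rr g t := (lt_rr_iff' hg hfin hI).mpr htd
          refine ⟨Or.inl ?_, ht0, ht1⟩
          rw [hlamdef]
          simp only [if_pos hI]
          linarith
      rw [hseteq, Real.volume_Ioo, sub_zero, ENNReal.ofReal_toReal (dd_ne_top g _)]
    rw [hLg, hLl]
  -- integrability of the rearranged positive part
  have hposlam_int : Integrable (fun t => max (lam t - c) 0) μ := by
    refine ⟨hml.aestronglyMeasurable, ?_⟩
    have hco : (∫⁻ t, (‖max (lam t - c) 0‖₊ : ℝ≥0∞) ∂μ)
        = ∫⁻ t in Ioo (0:ℝ) 1, ENNReal.ofReal (max (lam t - c) 0) :=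
      lintegral_congr fun t => by
        rw [← enorm_eq_nnnorm, Real.enorm_eq_ofReal_abs, abs_of_nonneg (le_max_right _ _)]
    have hgfin : (∫⁻ u in Ioo (0:ℝ) 1, ENNReal.ofReal (max (g u - c) 0)) < ∞ := by
      have h1 : (∫⁻ u, (‖max (g u - c) 0‖₊ : ℝ≥0∞) ∂μ) < ∞ := hposg_int.2
      refine lt_of_eq_of_lt ?_ h1
      exact lintegral_congr fun u => by
        rw [← enorm_eq_nnnorm, Real.enorm_eq_ofReal_abs, abs_of_nonneg (le_max_right _ _)]
    show (∫⁻ t, (‖max (lam t - c) 0‖₊ : ℝ≥0∞) ∂μ) < ∞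
    rw [hco, ← hlint_eq]
    exact hgfin
  -- Bochner version of the layer cake identity
  have hE1 : (∫ u in Ioo (0:ℝ) 1, max (f u - c) 0) = ∫ t in Ioo (0:ℝ) 1, max (lam t - c) 0 := by
    have e1 : (∫ u in Ioo (0:ℝ) 1, max (f u - c) 0) = ∫ u in Ioo (0:ℝ) 1, max (g u - c) 0 :=
      integral_congr_ae (by filter_upwards [hfg] with u hu; rw [hu])
    have e2 : (∫ u in Ioo (0:ℝ) 1, max (g u - c) 0)
        = (∫⁻ u in Ioo (0:ℝ) 1, ENNReal.ofReal (max (g u - c) 0)).toReal :=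
      integral_eq_lintegral_of_nonneg_ae (Filter.Eventually.of_forall fun u => le_max_right _ _)
        hmg.aestronglyMeasurable
    have e3 : (∫ t in Ioo (0:ℝ) 1, max (lam t - c) 0)
        = (∫⁻ t in Ioo (0:ℝ) 1, ENNReal.ofReal (max (lam t - c) 0)).toReal :=
      integral_eq_lintegral_of_nonneg_ae (Filter.Eventually.of_forall fun t => le_max_right _ _)
        hml.aestronglyMeasurable
    rw [e1, e2, hlint_eq, ← e3]
  -- rr g ≥ c on (0,s), ≤ c on [s,1)
  have hanti_lo : ∀ t ∈ Ioo (0:ℝ) s, c ≤ rr g t := by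
    intro t ht
    have := rr_anti hg hfin ⟨ht.1, ht.2.trans hs1⟩ hsmem ht.2.le
    rwa [hcg] at this
  have hanti_hi : ∀ t ∈ Ico s 1, rr g t ≤ c := by
    intro t ht
    have := rr_anti hg hfin hsmem ⟨lt_of_lt_of_le hs0 ht.1, ht.2⟩ ht.1
    rwa [hcg] at this
  -- restrict the integral of the positive part of lam to (0,s)
  have hlam_on : ∀ t ∈ Ioo (0:ℝ) 1, lam t = rr g t := fun t ht => by
    rw [hlamdef]; simp only [if_pos ht]
  have hsplit : (∫ t in Ioo (0:ℝ) 1, max (lam t - c) 0)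
      = ∫ t in Ioo (0:ℝ) s, max (lam t - c) 0 := by
    have hun : Ioo (0:ℝ) s ∪ Ico s 1 = Ioo (0:ℝ) 1 := Ioo_union_Ico_eq_Ioo hs0 hs1.le
    have hdisj : Disjoint (Ioo (0:ℝ) s) (Ico s 1) := by
      apply Set.disjoint_left.mpr
      rintro t ⟨_, h2⟩ ⟨h3, _⟩
      exact absurd h2 (not_lt.mpr h3)
    have hzero : (∫ t in Ico s 1, max (lam t - c) 0) = 0 := by
      rw [setIntegral_congr_fun measurableSet_Ico
        (g := fun _ : ℝ => (0:ℝ)) fun t ht => ?_, integral_zero]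
      show max (lam t - c) 0 = 0
      have h1 : t ∈ Ioo (0:ℝ) 1 := ⟨lt_of_lt_of_le hs0 ht.1, ht.2⟩
      have h2 : rr g t ≤ c := hanti_hi t ht
      rw [hlam_on t h1]
      exact max_eq_right (by linarith)
    have hplI : IntegrableOn (fun t => max (lam t - c) 0) (Ioo (0:ℝ) 1) volume :=
      hposlam_int
    have hsub1 : Ioo (0:ℝ) s ⊆ Ioo (0:ℝ) 1 := Ioo_subset_Ioo le_rfl hs1.le
    have hsub2 : Ico s 1 ⊆ Ioo (0:ℝ) 1 := fun t ht => ⟨lt_of_lt_of_le hs0 ht.1, ht.2⟩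
    have hu := setIntegral_union hdisj measurableSet_Ico
      (hplI.mono_set hsub1) (hplI.mono_set hsub2) (f := fun t => max (lam t - c) 0)
    rw [hun] at hu
    rw [hu, hzero, add_zero]
  -- the key identity : ∫_{(0,s)} rr f = c*s + ∫_I (f-c)⁺
  have hplI : IntegrableOn (fun t => max (lam t - c) 0) (Ioo (0:ℝ) 1) volume :=
    hposlam_int
  have hsub1 : Ioo (0:ℝ) s ⊆ Ioo (0:ℝ) 1 := Ioo_subset_Ioo le_rfl hs1.le
  have hconst_s : IntegrableOn (fun _ : ℝ => c) (Ioo (0:ℝ) s) volume :=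
    (integrableOn_const_iff).mpr (Or.inr (by rw [Real.volume_Ioo]; exact ENNReal.ofReal_lt_top))
  have hEs : (∫ t in Ioo (0:ℝ) s, rr f t) = c * s + ∫ u in Ioo (0:ℝ) 1, max (f u - c) 0 := by
    have step1 : (∫ t in Ioo (0:ℝ) s, rr f t)
        = ∫ t in Ioo (0:ℝ) s, (c + max (lam t - c) 0) := by
      apply setIntegral_congr_fun measurableSet_Ioo
      intro t ht
      show rr f t = c + max (lam t - c) 0
      have hI : t ∈ Ioo (0:ℝ) 1 := hsub1 ht
      have h1 : c ≤ rr g t := hanti_lo t ht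
      rw [hrrg, hlam_on t hI, max_eq_left (by linarith : (0:ℝ) ≤ rr g t - c)]
      ring
    have step2 : (∫ t in Ioo (0:ℝ) s, (c + max (lam t - c) 0))
        = (∫ _ in Ioo (0:ℝ) s, c) + ∫ t in Ioo (0:ℝ) s, max (lam t - c) 0 :=
      integral_add hconst_s (hplI.mono_set hsub1)
    have step3 : (∫ _ in Ioo (0:ℝ) s, c) = c * s := by
      rw [setIntegral_const, measureReal_def, Real.volume_Ioo, sub_zero, ENNReal.toReal_ofReal hs0.le,
        smul_eq_mul, mul_comm]
    rw [step1, step2, step3, ← hsplit, ← hE1]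
  -- bathtub equality chain
  have hAfin : volume A ≠ ∞ := by rw [hAm]; exact ENNReal.ofReal_ne_top
  have hfA : IntegrableOn f A volume := hf.mono_set hAsub
  have hconstA : IntegrableOn (fun _ : ℝ => c) A volume :=
    (integrableOn_const_iff).mpr (Or.inr hAfin.lt_top)
  have hsubA : IntegrableOn (fun u => f u - c) A volume := hfA.sub hconstA
  have hRdef : (∫ u in A, f u) = c * s + ∫ u in A, (f u - c) := by
    have e1 : (∫ u in A, f u) = ∫ u in A, (c + (f u - c)) :=
      setIntegral_congr_fun hA fun u _ => by show f u = c + (f u - c); ring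
    rw [e1, integral_add hconstA hsubA, setIntegral_const, measureReal_def, hAm,
      ENNReal.toReal_ofReal hs0.le, smul_eq_mul, mul_comm]
  have hkey : (∫ u in A, (f u - c)) = ∫ u in Ioo (0:ℝ) 1, max (f u - c) 0 := by
    have h1 := hopt
    rw [hEs, hRdef] at h1
    linarith
  -- splitting the positive-part integral over A and I \ A
  have hdiffmeas : MeasurableSet (Ioo (0:ℝ) 1 \ A) := hmeasI.diff hA
  have hposfI : IntegrableOn (fun u => max (f u - c) 0) (Ioo (0:ℝ) 1) volume := hposf_int
  have hPsplit : (∫ u in Ioo (0:ℝ) 1, max (f u - c) 0)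
      = (∫ u in A, max (f u - c) 0) + ∫ u in Ioo (0:ℝ) 1 \ A, max (f u - c) 0 := by
    have hu := setIntegral_union disjoint_sdiff_self_right
      hdiffmeas (hposfI.mono_set hAsub) (hposfI.mono_set diff_subset)
      (f := fun u => max (f u - c) 0)
    rwa [union_diff_cancel hAsub] at hu
  have hQR : (∫ u in A, max (f u - c) 0) - (∫ u in A, (f u - c)) = ∫ u in A, max (c - f u) 0 := by
    rw [← integral_sub (hposfI.mono_set hAsub) hsubA]
    apply setIntegral_congr_fun hA
    intro u _
    show max (f u - c) 0 - (f u - c) = max (c - f u) 0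
    rcases le_total 0 (f u - c) with h | h
    · rw [max_eq_left h, max_eq_right (by linarith : c - f u ≤ 0)]; ring
    · rw [max_eq_right h, max_eq_left (by linarith : (0:ℝ) ≤ c - f u)]; ring
  have hD_nonneg : 0 ≤ ∫ u in Ioo (0:ℝ) 1 \ A, max (f u - c) 0 :=
    setIntegral_nonneg hdiffmeas fun u _ => le_max_right _ _
  have hN_nonneg : 0 ≤ ∫ u in A, max (c - f u) 0 :=
    setIntegral_nonneg hA fun u _ => le_max_right _ _
  have hD_zero : (∫ u in Ioo (0:ℝ) 1 \ A, max (f u - c) 0) = 0 := by linarith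
  have hN_zero : (∫ u in A, max (c - f u) 0) = 0 := by linarith
  constructor
  · -- {f > c} \ A is null
    have hz := (integral_eq_zero_iff_of_nonneg_ae
      (Filter.Eventually.of_forall fun u => le_max_right _ _)
      (hposfI.mono_set diff_subset)).mp hD_zero
    have hz' : ∀ᵐ u ∂volume, u ∈ Ioo (0:ℝ) 1 \ A → max (f u - c) 0 = 0 :=
      (ae_restrict_iff' hdiffmeas).mp hz
    rw [ae_iff] at hz'
    refine measure_mono_null ?_ hz'
    rintro u ⟨⟨huI, hcf⟩, huA⟩
    simp only [mem_setOf_eq]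
    intro himp
    have h0 := himp ⟨huI, huA⟩
    have h1 : f u - c ≤ max (f u - c) 0 := le_max_left _ _
    rw [h0] at h1
    exact absurd hcf (by linarith)
  · -- A \ {f ≥ c} is null
    have hnegA_int : IntegrableOn (fun u => max (c - f u) 0) A volume :=
      ((hconstA.sub hfA)).pos_part
    have hz := (integral_eq_zero_iff_of_nonneg_ae
      (Filter.Eventually.of_forall fun u => le_max_right _ _) hnegA_int).mp hN_zero
    have hz' : ∀ᵐ u ∂volume, u ∈ A → max (c - f u) 0 = 0 := (ae_restrict_iff' hA).mp hz
    rw [ae_iff] at hz'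
    refine measure_mono_null ?_ hz'
    rintro u ⟨huA, hnot⟩
    simp only [mem_setOf_eq]
    intro himp
    have h0 := himp huA
    have hflt : f u < c := by
      by_contra hge
      exact hnot ⟨hAsub huA, not_lt.mp hge⟩
    have h1 : c - f u ≤ max (c - f u) 0 := le_max_left _ _
    rw [h0] at h1
    linarith
end

section
/- Let P be a partial averaging operator on L¹(0,1) associated to a finite or countable family of pairwise disjoint measurable sets A_k ⊂ (0,1) of positive measure: P(x) = Σ_k (1/m(A_k)) (∫_{A_k} x dm)·χ_{A_k} + x·χ_{A_∞}, where A_∞ is the complement of ∪_k A_k. Then P(x) ≺ x for every x ∈ L¹(0,1). -/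
open MeasureTheory Set
open scoped ENNReal

/-- The partial averaging operator associated to a countable disjoint family `A`. -/
noncomputable def partialAvg {ι : Type*} [Countable ι] (A : ι → Set ℝ) (x : ℝ → ℝ) :
    ℝ → ℝ := fun u =>
  (∑' k, Set.indicator (A k)
      (fun _ => (∫ v in A k, x v) / (volume (A k)).toReal) u) +
    Set.indicator (Ioo (0:ℝ) 1 \ ⋃ k, A k) x u

/-- The distribution function of `g` on `(0,1)`. -/
noncomputable def dd (g : ℝ → ℝ) (s : ℝ) : ℝ≥0∞ := volume {u ∈ Ioo (0:ℝ) 1 | s < g u}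

lemma rr_eq (g : ℝ → ℝ) (t : ℝ) : rr g t = sInf {s : ℝ | dd g s ≤ ENNReal.ofReal t} := rfl

lemma dd_anti (g : ℝ → ℝ) : Antitone (dd g) := fun s₁ s₂ h =>
  measure_mono (fun u hu => ⟨hu.1, lt_of_le_of_lt h hu.2⟩)

lemma dd_le_one (g : ℝ → ℝ) (s : ℝ) : dd g s ≤ 1 := by
  calc dd g s ≤ volume (Ioo (0:ℝ) 1) := measure_mono (sep_subset _ _)
    _ = 1 := by simp [Real.volume_Ioo]

lemma dd_ne_top (g : ℝ → ℝ) (s : ℝ) : dd g s ≠ ⊤ :=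
  ne_top_of_le_ne_top ENNReal.one_ne_top (dd_le_one g s)

lemma dd_eq_restrict (g : ℝ → ℝ) (s : ℝ) :
    dd g s = (volume.restrict (Ioo (0:ℝ) 1)) {u | s < g u} := by
  rw [Measure.restrict_apply' measurableSet_Ioo]
  unfold dd
  congr 1
  ext u; simp [and_comm]

/-- Markov: the set `{s | dd g s ≤ t}` is nonempty for `t > 0`. -/
lemma exists_dd_le {g : ℝ → ℝ} (hg : IntegrableOn g (Ioo (0:ℝ) 1)) {t : ℝ} (ht : 0 < t) :
    ∃ s : ℝ, dd g s ≤ ENNReal.ofReal t := by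
  set μ := volume.restrict (Ioo (0:ℝ) 1)
  set L : ℝ≥0∞ := ∫⁻ u, ‖g u‖₊ ∂μ with hL
  have hLfin : L ≠ ⊤ := hg.2.ne
  set s : ℝ := (L.toReal + 1) / t with hs
  have hs0 : 0 < s := div_pos (by positivity) ht
  refine ⟨s, ?_⟩
  have hmeas : dd g s ≤ μ {u | ENNReal.ofReal s ≤ (‖g u‖₊ : ℝ≥0∞)} := by
    rw [dd_eq_restrict]
    refine measure_mono (fun u hu => ?_)
    have : ENNReal.ofReal s ≤ ENNReal.ofReal (g u) := ENNReal.ofReal_le_ofReal (le_of_lt hu)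
    refine this.trans ?_
    exact Real.ofReal_le_enorm (g u)
  have hmarkov : ENNReal.ofReal s * μ {u | ENNReal.ofReal s ≤ (‖g u‖₊ : ℝ≥0∞)} ≤ L :=
    mul_meas_ge_le_lintegral₀ hg.aestronglyMeasurable.enorm _
  have h1 : ENNReal.ofReal s * dd g s ≤ L :=
    le_trans (mul_le_mul_right hmeas _) hmarkov
  have hsne : ENNReal.ofReal s ≠ 0 := by simp [ENNReal.ofReal_eq_zero, not_le, hs0]
  have h2 : dd g s ≤ L / ENNReal.ofReal s := by
    rw [ENNReal.le_div_iff_mul_le (Or.inl hsne) (Or.inl ENNReal.ofReal_ne_top)]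
    rwa [mul_comm]
  refine h2.trans ?_
  rw [ENNReal.div_le_iff_le_mul (Or.inl hsne) (Or.inr (by simp [ENNReal.ofReal_eq_zero, not_le, ht]))]
  calc L = ENNReal.ofReal L.toReal := (ENNReal.ofReal_toReal hLfin).symm
    _ ≤ ENNReal.ofReal (L.toReal + 1) := ENNReal.ofReal_le_ofReal (by linarith)
    _ = ENNReal.ofReal (t * s) := by rw [hs, mul_div_cancel₀ _ (ne_of_gt ht)]
    _ = ENNReal.ofReal t * ENNReal.ofReal s := ENNReal.ofReal_mul (le_of_lt ht)

/-- For `t < 1` there is `s₀` with `dd g s₀ > t`. -/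
lemma exists_lt_dd (g : ℝ → ℝ) {t : ℝ} (ht : t < 1) :
    ∃ s₀ : ℝ, ENNReal.ofReal t < dd g s₀ := by
  have hmono : Monotone (fun n : ℕ => {u ∈ Ioo (0:ℝ) 1 | -(n:ℝ) < g u}) := by
    intro n m hnm u hu
    exact ⟨hu.1, lt_of_le_of_lt (neg_le_neg (by exact_mod_cast hnm)) hu.2⟩
  have hunion : (⋃ n : ℕ, {u ∈ Ioo (0:ℝ) 1 | -(n:ℝ) < g u}) = Ioo (0:ℝ) 1 := by
    apply Subset.antisymm
    · exact iUnion_subset fun n => sep_subset _ _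
    · intro u hu
      obtain ⟨n, hn⟩ := exists_nat_gt (-g u)
      exact mem_iUnion.2 ⟨n, hu, by linarith⟩
  have h1 : (1 : ℝ≥0∞) = ⨆ n : ℕ, dd g (-(n:ℝ)) := by
    have := hmono.measure_iUnion (μ := volume)
    rw [hunion] at this
    simpa [dd, Real.volume_Ioo] using this
  have ht1 : ENNReal.ofReal t < 1 := ENNReal.ofReal_lt_one.2 ht
  rw [h1] at ht1
  obtain ⟨n, hn⟩ := lt_iSup_iff.1 ht1
  exact ⟨-(n:ℝ), hn⟩

lemma bddBelow_S (g : ℝ → ℝ) {t : ℝ} (ht : t < 1) :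
    BddBelow {s : ℝ | dd g s ≤ ENNReal.ofReal t} := by
  obtain ⟨s₀, hs₀⟩ := exists_lt_dd g ht
  refine ⟨s₀, fun σ hσ => ?_⟩
  by_contra h
  push_neg at h
  exact absurd (le_trans (dd_anti g h.le) hσ) (not_le.2 hs₀)

lemma nonempty_S {g : ℝ → ℝ} (hg : IntegrableOn g (Ioo (0:ℝ) 1)) {t : ℝ} (ht : 0 < t) :
    {s : ℝ | dd g s ≤ ENNReal.ofReal t}.Nonempty := exists_dd_le hg ht

/-- Right-continuity of the distribution function. -/
lemma dd_right_cont (g : ℝ → ℝ) {t : ℝ≥0∞} {s : ℝ} (h : t < dd g s) :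
    ∃ s', s < s' ∧ t < dd g s' := by
  have hmono : Monotone (fun n : ℕ => {u ∈ Ioo (0:ℝ) 1 | s + 1/((n:ℝ)+1) < g u}) := by
    intro n m hnm u hu
    refine ⟨hu.1, lt_of_le_of_lt ?_ hu.2⟩
    have hcast : (n:ℝ) ≤ m := Nat.cast_le.2 hnm
    have : 1/((m:ℝ)+1) ≤ 1/((n:ℝ)+1) :=
      one_div_le_one_div_of_le (by positivity) (by linarith)
    linarith
  have hunion : (⋃ n : ℕ, {u ∈ Ioo (0:ℝ) 1 | s + 1/((n:ℝ)+1) < g u})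
      = {u ∈ Ioo (0:ℝ) 1 | s < g u} := by
    apply Subset.antisymm
    · refine iUnion_subset fun n u hu => ⟨hu.1, ?_⟩
      have : (0:ℝ) < 1/((n:ℝ)+1) := by positivity
      linarith [hu.2]
    · intro u hu
      obtain ⟨n, hn⟩ := exists_nat_one_div_lt (sub_pos.2 hu.2)
      exact mem_iUnion.2 ⟨n, hu.1, by linarith⟩
  have h1 : dd g s = ⨆ n : ℕ, dd g (s + 1/((n:ℝ)+1)) := by
    have := hmono.measure_iUnion (μ := volume)
    rw [hunion] at this
    exact this
  rw [h1] at h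
  obtain ⟨n, hn⟩ := lt_iSup_iff.1 h
  exact ⟨s + 1/((n:ℝ)+1), lt_add_of_pos_right s (by positivity), hn⟩

/-- Key characterisation: for `t ∈ (0,1)`, `s < rr g t ↔ t < dd g s`. -/
lemma lt_rr_iff {g : ℝ → ℝ} (hg : IntegrableOn g (Ioo (0:ℝ) 1)) {t : ℝ}
    (ht : t ∈ Ioo (0:ℝ) 1) (s : ℝ) :
    s < rr g t ↔ ENNReal.ofReal t < dd g s := by
  constructor
  · intro h
    by_contra hc
    push_neg at hc
    exact absurd (csInf_le (bddBelow_S g ht.2) hc) (not_le.2 h)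
  · intro h
    obtain ⟨s', hss', hs'⟩ := dd_right_cont g h
    rw [rr_eq]
    refine lt_of_lt_of_le hss' (le_csInf (nonempty_S hg ht.1) fun σ hσ => ?_)
    by_contra hcon
    push_neg at hcon
    exact absurd (le_trans (dd_anti g hcon.le) hσ) (not_le.2 hs')

lemma rr_lt_iff {g : ℝ → ℝ} (hg : IntegrableOn g (Ioo (0:ℝ) 1)) {t : ℝ}
    (ht : t ∈ Ioo (0:ℝ) 1) (s : ℝ) :
    rr g t < s ↔ ∃ σ, σ < s ∧ dd g σ ≤ ENNReal.ofReal t := by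
  rw [rr_eq, csInf_lt_iff (bddBelow_S g ht.2) (nonempty_S hg ht.1)]
  constructor
  · rintro ⟨b, hb, hbs⟩; exact ⟨b, hbs, hb⟩
  · rintro ⟨σ, hσs, hσ⟩; exact ⟨σ, hσ, hσs⟩

lemma rr_antitoneOn {g : ℝ → ℝ} (hg : IntegrableOn g (Ioo (0:ℝ) 1)) :
    AntitoneOn (rr g) (Ioo (0:ℝ) 1) := by
  intro t₁ ht₁ t₂ ht₂ h
  rw [rr_eq, rr_eq]
  refine csInf_le_csInf (bddBelow_S g ht₂.2) (nonempty_S hg ht₁.1) ?_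
  intro σ hσ
  exact le_trans hσ (ENNReal.ofReal_le_ofReal h)

/-- `rr g` is equimeasurable with `g`: upper distribution. -/
lemma dd_rr {g : ℝ → ℝ} (hg : IntegrableOn g (Ioo (0:ℝ) 1)) (s : ℝ) :
    volume {t ∈ Ioo (0:ℝ) 1 | s < rr g t} = dd g s := by
  have hfin := dd_ne_top g s
  set c : ℝ := (dd g s).toReal with hc
  have hc1 : c ≤ 1 := by
    rw [hc, ← ENNReal.toReal_one]
    exact ENNReal.toReal_mono ENNReal.one_ne_top (dd_le_one g s)
  have hset : {t ∈ Ioo (0:ℝ) 1 | s < rr g t} = Ioo 0 c := by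
    ext t
    constructor
    · rintro ⟨⟨h0, h1⟩, hs⟩
      have := (lt_rr_iff hg ⟨h0, h1⟩ s).1 hs
      exact ⟨h0, (ENNReal.ofReal_lt_iff_lt_toReal h0.le hfin).1 this⟩
    · rintro ⟨h0, hct⟩
      have h1 : t < 1 := lt_of_lt_of_le hct hc1
      have : ENNReal.ofReal t < dd g s := (ENNReal.ofReal_lt_iff_lt_toReal h0.le hfin).2 hct
      exact ⟨⟨h0, h1⟩, (lt_rr_iff hg ⟨h0, h1⟩ s).2 this⟩
  rw [hset, Real.volume_Ioo, sub_zero, hc, ENNReal.ofReal_toReal hfin]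

/-- `rr g` is equimeasurable with `g`: lower distribution. -/
lemma dd_rr_lower {g : ℝ → ℝ} (hg : IntegrableOn g (Ioo (0:ℝ) 1)) (s : ℝ) :
    volume {t ∈ Ioo (0:ℝ) 1 | rr g t < s}
      = (volume.restrict (Ioo (0:ℝ) 1)) {u | g u < s} := by
  set μ := volume.restrict (Ioo (0:ℝ) 1) with hμ
  have hμuniv : μ univ = 1 := by
    rw [hμ, Measure.restrict_apply' measurableSet_Ioo, univ_inter, Real.volume_Ioo]
    norm_num
  set σ : ℕ → ℝ := fun n => s - 1/((n:ℝ)+1) with hσ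
  have hσlt : ∀ n, σ n < s := fun n => by
    have : (0:ℝ) < 1/((n:ℝ)+1) := by positivity
    simp only [hσ]; linarith
  have hσmono : Monotone σ := by
    intro n m hnm
    have hcast : (n:ℝ) ≤ m := Nat.cast_le.2 hnm
    have : 1/((m:ℝ)+1) ≤ 1/((n:ℝ)+1) := one_div_le_one_div_of_le (by positivity) (by linarith)
    simp only [hσ]; linarith
  -- the complement identity
  have hcompl : ∀ τ : ℝ, μ {u | g u ≤ τ} = 1 - dd g τ := by
    intro τ
    have hnm : NullMeasurableSet {u | τ < g u} μ := by
      have : NullMeasurable g μ := hg.aemeasurable.nullMeasurable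
      exact this measurableSet_Ioi
    have hcs : {u : ℝ | g u ≤ τ} = {u | τ < g u}ᶜ := by ext u; simp [not_lt]
    rw [hcs, measure_compl₀ hnm (by rw [← dd_eq_restrict]; exact dd_ne_top g τ),
      hμuniv, ← dd_eq_restrict]
  -- LHS
  have hLHS : volume {t ∈ Ioo (0:ℝ) 1 | rr g t < s}
      = ⨆ n : ℕ, (1 - dd g (σ n)) := by
    have hE : ∀ n : ℕ, {t ∈ Ioo (0:ℝ) 1 | dd g (σ n) ≤ ENNReal.ofReal t}
        = Ioo (0:ℝ) 1 ∩ Ici ((dd g (σ n)).toReal) := by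
      intro n
      ext t
      simp only [mem_sep_iff, mem_inter_iff, mem_Ici]
      constructor
      · rintro ⟨htI, hle⟩
        exact ⟨htI, (ENNReal.le_ofReal_iff_toReal_le (dd_ne_top g _) htI.1.le).1 hle⟩
      · rintro ⟨htI, hle⟩
        exact ⟨htI, (ENNReal.le_ofReal_iff_toReal_le (dd_ne_top g _) htI.1.le).2 hle⟩
    have hEvol : ∀ n : ℕ, volume (Ioo (0:ℝ) 1 ∩ Ici ((dd g (σ n)).toReal))
        = 1 - dd g (σ n) := by
      intro n
      set cn := (dd g (σ n)).toReal with hcn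
      have hcn0 : 0 ≤ cn := ENNReal.toReal_nonneg
      have hcn1 : cn ≤ 1 := by
        rw [hcn, ← ENNReal.toReal_one]
        exact ENNReal.toReal_mono ENNReal.one_ne_top (dd_le_one g _)
      have hvol : volume (Ioo (0:ℝ) 1 ∩ Ici cn) = ENNReal.ofReal (1 - cn) := by
        rcases eq_or_lt_of_le hcn0 with h0 | h0
        · have : Ioo (0:ℝ) 1 ∩ Ici cn = Ioo 0 1 := by
            apply inter_eq_left.2
            intro t ht; rw [← h0]; exact ht.1.le
          rw [this, Real.volume_Ioo, ← h0, sub_zero]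
        · have : Ioo (0:ℝ) 1 ∩ Ici cn = Ico cn 1 := by
            ext t
            simp only [mem_inter_iff, mem_Ioo, mem_Ici, mem_Ico]
            constructor
            · rintro ⟨⟨_, h1⟩, h2⟩; exact ⟨h2, h1⟩
            · rintro ⟨h1, h2⟩; exact ⟨⟨lt_of_lt_of_le h0 h1, h2⟩, h1⟩
          rw [this, Real.volume_Ico]
      rw [hvol, ENNReal.ofReal_sub 1 hcn0, ENNReal.ofReal_one, hcn,
        ENNReal.ofReal_toReal (dd_ne_top g _)]
    have hsets : {t ∈ Ioo (0:ℝ) 1 | rr g t < s}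
        = ⋃ n : ℕ, {t ∈ Ioo (0:ℝ) 1 | dd g (σ n) ≤ ENNReal.ofReal t} := by
      ext t
      simp only [mem_sep_iff, mem_iUnion]
      constructor
      · rintro ⟨htI, hlt⟩
        obtain ⟨τ, hτs, hτ⟩ := (rr_lt_iff hg htI s).1 hlt
        obtain ⟨n, hn⟩ := exists_nat_one_div_lt (sub_pos.2 hτs)
        refine ⟨n, htI, le_trans (dd_anti g ?_) hτ⟩
        simp only [hσ]; linarith
      · rintro ⟨n, htI, hn⟩
        exact ⟨htI, (rr_lt_iff hg htI s).2 ⟨σ n, hσlt n, hn⟩⟩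
    have hmono2 : Monotone (fun n : ℕ => {t ∈ Ioo (0:ℝ) 1 | dd g (σ n) ≤ ENNReal.ofReal t}) := by
      intro n m hnm t ht
      exact ⟨ht.1, le_trans (dd_anti g (hσmono hnm)) ht.2⟩
    rw [hsets, hmono2.measure_iUnion]
    congr 1
    ext n
    rw [hE n, hEvol n]
  -- RHS
  have hRHS : μ {u | g u < s} = ⨆ n : ℕ, (1 - dd g (σ n)) := by
    have hsets : {u : ℝ | g u < s} = ⋃ n : ℕ, {u | g u ≤ σ n} := by
      ext u
      simp only [mem_setOf_eq, mem_iUnion]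
      constructor
      · intro h
        obtain ⟨n, hn⟩ := exists_nat_one_div_lt (sub_pos.2 h)
        exact ⟨n, by simp only [hσ]; linarith⟩
      · rintro ⟨n, hn⟩; exact lt_of_le_of_lt hn (hσlt n)
    have hmono2 : Monotone (fun n : ℕ => {u : ℝ | g u ≤ σ n}) := by
      intro n m hnm u hu
      exact le_trans hu (hσmono hnm)
    rw [hsets, hmono2.measure_iUnion]
    congr 1
    ext n
    exact hcompl (σ n)
  rw [hLHS, hRHS]

lemma rr_aemeasurable {g : ℝ → ℝ} (hg : IntegrableOn g (Ioo (0:ℝ) 1)) :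
    AEMeasurable (rr g) (volume.restrict (Ioo (0:ℝ) 1)) :=
  aemeasurable_restrict_of_antitoneOn measurableSet_Ioo (rr_antitoneOn hg)

/-- Layer-cake equality of positive parts' lintegrals. -/
lemma pos_part_lintegral {g : ℝ → ℝ} (hg : IntegrableOn g (Ioo (0:ℝ) 1)) (c : ℝ) :
    ∫⁻ t in Ioo (0:ℝ) 1, ENNReal.ofReal (max (rr g t - c) 0)
      = ∫⁻ u in Ioo (0:ℝ) 1, ENNReal.ofReal (max (g u - c) 0) := by
  set μ := volume.restrict (Ioo (0:ℝ) 1) with hμ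
  have hm1 : AEMeasurable (fun t => max (rr g t - c) 0) μ :=
    ((rr_aemeasurable hg).sub aemeasurable_const).max aemeasurable_const
  have hm2 : AEMeasurable (fun u => max (g u - c) 0) μ :=
    (hg.aemeasurable.sub aemeasurable_const).max aemeasurable_const
  rw [lintegral_eq_lintegral_meas_lt (f := fun t => max (rr g t - c) 0) μ
      (Filter.Eventually.of_forall fun t => le_max_right _ _) hm1,
    lintegral_eq_lintegral_meas_lt (f := fun u => max (g u - c) 0) μ
      (Filter.Eventually.of_forall fun t => le_max_right _ _) hm2]
  refine lintegral_congr_ae ?_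
  filter_upwards [ae_restrict_mem measurableSet_Ioi] with τ hτ
  have hτ0 : (0:ℝ) < τ := hτ
  have h1 : {a : ℝ | τ < max (rr g a - c) 0} = {a | c + τ < rr g a} := by
    ext a
    simp only [mem_setOf_eq, lt_max_iff]
    constructor
    · rintro (h | h) <;> linarith
    · intro h; left; linarith
  have h2 : {a : ℝ | τ < max (g a - c) 0} = {a | c + τ < g a} := by
    ext a
    simp only [mem_setOf_eq, lt_max_iff]
    constructor
    · rintro (h | h) <;> linarith
    · intro h; left; linarith
  rw [h1, h2, hμ, Measure.restrict_apply' measurableSet_Ioo,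
    Measure.restrict_apply' measurableSet_Ioo]
  have e1 : {a | c + τ < rr g a} ∩ Ioo (0:ℝ) 1 = {t ∈ Ioo (0:ℝ) 1 | c + τ < rr g t} := by
    ext a; simp [and_comm]
  have e2 : {a | c + τ < g a} ∩ Ioo (0:ℝ) 1 = {t ∈ Ioo (0:ℝ) 1 | c + τ < g t} := by
    ext a; simp [and_comm]
  rw [e1, e2, dd_rr hg]
  rfl

/-- Layer-cake equality of negative parts' lintegrals. -/
lemma neg_part_lintegral {g : ℝ → ℝ} (hg : IntegrableOn g (Ioo (0:ℝ) 1)) :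
    ∫⁻ t in Ioo (0:ℝ) 1, ENNReal.ofReal (max (-rr g t) 0)
      = ∫⁻ u in Ioo (0:ℝ) 1, ENNReal.ofReal (max (-g u) 0) := by
  set μ := volume.restrict (Ioo (0:ℝ) 1) with hμ
  have hm1 : AEMeasurable (fun t => max (-rr g t) 0) μ :=
    ((rr_aemeasurable hg).neg).max aemeasurable_const
  have hm2 : AEMeasurable (fun u => max (-g u) 0) μ :=
    (hg.aemeasurable.neg).max aemeasurable_const
  rw [lintegral_eq_lintegral_meas_lt (f := fun t => max (-rr g t) 0) μ
      (Filter.Eventually.of_forall fun t => le_max_right _ _) hm1,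
    lintegral_eq_lintegral_meas_lt (f := fun u => max (-g u) 0) μ
      (Filter.Eventually.of_forall fun t => le_max_right _ _) hm2]
  refine lintegral_congr_ae ?_
  filter_upwards [ae_restrict_mem measurableSet_Ioi] with τ hτ
  have hτ0 : (0:ℝ) < τ := hτ
  have h1 : {a : ℝ | τ < max (-rr g a) 0} = {a | rr g a < -τ} := by
    ext a
    simp only [mem_setOf_eq, lt_max_iff]
    constructor
    · rintro (h | h) <;> linarith
    · intro h; left; linarith
  have h2 : {a : ℝ | τ < max (-g a) 0} = {a | g a < -τ} := by
    ext a
    simp only [mem_setOf_eq, lt_max_iff]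
    constructor
    · rintro (h | h) <;> linarith
    · intro h; left; linarith
  rw [h1, h2, hμ, Measure.restrict_apply' measurableSet_Ioo]
  have e1 : {a | rr g a < -τ} ∩ Ioo (0:ℝ) 1 = {t ∈ Ioo (0:ℝ) 1 | rr g t < -τ} := by
    ext a; simp [and_comm]
  rw [e1, dd_rr_lower hg]

lemma ennnorm_eq_pos_add_neg (a : ℝ) :
    (‖a‖₊ : ℝ≥0∞) = ENNReal.ofReal (max a 0) + ENNReal.ofReal (max (-a) 0) := by
  rcases le_total 0 a with h | h
  · rw [max_eq_left h, max_eq_right (neg_nonpos.2 h), ENNReal.ofReal_zero, add_zero,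
      ← enorm_eq_nnnorm, Real.enorm_eq_ofReal h]
  · rw [max_eq_right h, max_eq_left (neg_nonneg.2 h), ENNReal.ofReal_zero, zero_add,
      ← enorm_eq_nnnorm, Real.enorm_eq_ofReal_abs, abs_of_nonpos h]

lemma pos_part_lintegral_ne_top {g : ℝ → ℝ} (hg : IntegrableOn g (Ioo (0:ℝ) 1)) (c : ℝ) :
    ∫⁻ u in Ioo (0:ℝ) 1, ENNReal.ofReal (max (g u - c) 0) ≠ ⊤ := by
  have hInt : IntegrableOn (fun u => max (g u - c) 0) (Ioo (0:ℝ) 1) := by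
    apply Integrable.pos_part
    exact hg.sub (integrableOn_const (by rw [Real.volume_Ioo]; exact ENNReal.ofReal_ne_top))
  have := hInt.2
  rw [HasFiniteIntegral] at this
  refine ne_top_of_le_ne_top this.ne (lintegral_mono fun u => ?_)
  rw [enorm_eq_nnnorm, ennnorm_eq_pos_add_neg]
  exact le_trans (ENNReal.ofReal_le_ofReal (le_max_left _ _)) le_self_add

lemma neg_part_lintegral_ne_top {g : ℝ → ℝ} (hg : IntegrableOn g (Ioo (0:ℝ) 1)) :
    ∫⁻ u in Ioo (0:ℝ) 1, ENNReal.ofReal (max (-g u) 0) ≠ ⊤ := by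
  have hInt : IntegrableOn (fun u => max (-g u) 0) (Ioo (0:ℝ) 1) := hg.neg.pos_part
  have := hInt.2
  rw [HasFiniteIntegral] at this
  refine ne_top_of_le_ne_top this.ne (lintegral_mono fun u => ?_)
  rw [enorm_eq_nnnorm, ennnorm_eq_pos_add_neg]
  exact le_trans (ENNReal.ofReal_le_ofReal (le_max_left _ _)) le_self_add

lemma rr_integrableOn {g : ℝ → ℝ} (hg : IntegrableOn g (Ioo (0:ℝ) 1)) :
    IntegrableOn (rr g) (Ioo (0:ℝ) 1) := by
  refine ⟨(rr_aemeasurable hg).aestronglyMeasurable, ?_⟩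
  rw [HasFiniteIntegral]
  have key : ∀ t : ℝ, (‖rr g t‖₊ : ℝ≥0∞)
      = ENNReal.ofReal (max (rr g t) 0) + ENNReal.ofReal (max (-rr g t) 0) :=
    fun t => ennnorm_eq_pos_add_neg (rr g t)
  calc ∫⁻ t in Ioo (0:ℝ) 1, ‖rr g t‖₊
      = ∫⁻ t in Ioo (0:ℝ) 1,
          (ENNReal.ofReal (max (rr g t) 0) + ENNReal.ofReal (max (-rr g t) 0)) :=
        lintegral_congr fun t => key t
    _ = (∫⁻ t in Ioo (0:ℝ) 1, ENNReal.ofReal (max (rr g t) 0))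
        + ∫⁻ t in Ioo (0:ℝ) 1, ENNReal.ofReal (max (-rr g t) 0) := by
        apply lintegral_add_left'
        exact ((rr_aemeasurable hg).max aemeasurable_const).ennreal_ofReal
    _ < ⊤ := by
        have h1 : (∫⁻ t in Ioo (0:ℝ) 1, ENNReal.ofReal (max (rr g t) 0))
            = ∫⁻ u in Ioo (0:ℝ) 1, ENNReal.ofReal (max (g u - 0) 0) := by
          rw [← pos_part_lintegral hg 0]
          simp only [sub_zero]
        rw [ENNReal.add_lt_top]
        constructor
        · rw [h1]
          exact (pos_part_lintegral_ne_top hg 0).lt_top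
        · rw [neg_part_lintegral hg]
          exact (neg_part_lintegral_ne_top hg).lt_top

/-- The fundamental equimeasurability identity for positive parts, in Bochner form. -/
lemma pos_part_integral_eq {g : ℝ → ℝ} (hg : IntegrableOn g (Ioo (0:ℝ) 1)) (c : ℝ) :
    ∫ t in Ioo (0:ℝ) 1, max (rr g t - c) 0 = ∫ u in Ioo (0:ℝ) 1, max (g u - c) 0 := by
  rw [integral_eq_lintegral_of_nonneg_ae (f := fun t => max (rr g t - c) 0)
      (Filter.Eventually.of_forall fun t => le_max_right _ _)
      (((rr_aemeasurable hg).sub aemeasurable_const).max aemeasurable_const).aestronglyMeasurable,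
    integral_eq_lintegral_of_nonneg_ae (f := fun u => max (g u - c) 0)
      (Filter.Eventually.of_forall fun t => le_max_right _ _)
      ((hg.aemeasurable.sub aemeasurable_const).max aemeasurable_const).aestronglyMeasurable,
    pos_part_lintegral hg c]

lemma const_integrableOn {s : Set ℝ} (hs : MeasurableSet s) (h : volume s ≠ ⊤) (C : ℝ) :
    IntegrableOn (fun _ : ℝ => C) s := by
  exact integrableOn_const h

lemma volume_Ioo_ne_top (a b : ℝ) : volume (Ioo a b) ≠ ⊤ := by
  rw [Real.volume_Ioo]; exact ENNReal.ofReal_ne_top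

/-- The crucial "min formula" equality: at the level `c = rr f s`. -/
lemma rr_setIntegral_eq {f : ℝ → ℝ} (hf : IntegrableOn f (Ioo (0:ℝ) 1)) {s : ℝ}
    (hs : s ∈ Ioo (0:ℝ) 1) :
    ∫ t in Ioo (0:ℝ) 1, max (rr f t - rr f s) 0
      = (∫ t in Ioo (0:ℝ) s, rr f t) - rr f s * s := by
  set c := rr f s with hc
  have hsplit : Ioo (0:ℝ) 1 = Ioo 0 s ∪ Ico s 1 := (Ioo_union_Ico_eq_Ioo hs.1 hs.2.le).symm
  have hdisj : Disjoint (Ioo (0:ℝ) s) (Ico s 1) := by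
    refine disjoint_left.2 fun t ht hts => ?_
    exact absurd ht.2 (not_lt.2 hts.1)
  have hIoosub : Ioo (0:ℝ) s ⊆ Ioo 0 1 := Ioo_subset_Ioo le_rfl hs.2.le
  have hIcosub : Ico s (1:ℝ) ⊆ Ioo 0 1 := fun t ht => ⟨lt_of_lt_of_le hs.1 ht.1, ht.2⟩
  have hrrint := rr_integrableOn hf
  have hmaxint : IntegrableOn (fun t => max (rr f t - c) 0) (Ioo (0:ℝ) 1) :=
    (hrrint.sub (const_integrableOn measurableSet_Ioo (volume_Ioo_ne_top 0 1) c)).pos_part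
  rw [hsplit, setIntegral_union hdisj measurableSet_Ico
    (hmaxint.mono_set (hsplit ▸ subset_union_left))
    (hmaxint.mono_set (hsplit ▸ subset_union_right))]
  have h2 : ∫ t in Ico s 1, max (rr f t - c) 0 = 0 := by
    rw [setIntegral_congr_fun measurableSet_Ico (g := fun _ => (0:ℝ))]
    · exact integral_zero _ _
    · intro t ht
      have htI : t ∈ Ioo (0:ℝ) 1 := hIcosub ht
      have : rr f t ≤ c := rr_antitoneOn hf hs htI ht.1
      simp [max_eq_right, sub_nonpos.2 this]
  have h1 : ∫ t in Ioo (0:ℝ) s, max (rr f t - c) 0 = (∫ t in Ioo (0:ℝ) s, rr f t) - c * s := by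
    rw [setIntegral_congr_fun measurableSet_Ioo (g := fun t => rr f t - c)]
    · rw [integral_sub (hrrint.mono_set hIoosub)
        (const_integrableOn measurableSet_Ioo (volume_Ioo_ne_top 0 s) c)]
      congr 1
      rw [setIntegral_const, smul_eq_mul, Real.volume_real_Ioo_of_le hs.1.le, sub_zero,
        mul_comm]
    · intro t ht
      have htI : t ∈ Ioo (0:ℝ) 1 := hIoosub ht
      have : c ≤ rr f t := rr_antitoneOn hf htI hs ht.2.le
      simp [max_eq_left, sub_nonneg.2 this]
  rw [h1, h2, add_zero]

/-- Main inequality lemma. -/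
lemma rr_int_le {g f : ℝ → ℝ} (hg : IntegrableOn g (Ioo (0:ℝ) 1))
    (hf : IntegrableOn f (Ioo (0:ℝ) 1))
    (hc : ∀ c : ℝ, (∫ u in Ioo (0:ℝ) 1, max (g u - c) 0) ≤ ∫ u in Ioo (0:ℝ) 1, max (f u - c) 0) :
    ∀ s ∈ Ico (0:ℝ) 1, (∫ t in Ioo (0:ℝ) s, rr g t) ≤ ∫ t in Ioo (0:ℝ) s, rr f t := by
  rintro s ⟨hs0, hs1⟩
  rcases eq_or_lt_of_le hs0 with h0 | h0
  · rw [← h0]; simp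
  have hsI : s ∈ Ioo (0:ℝ) 1 := ⟨h0, hs1⟩
  set c := rr f s with hc'
  have hIoosub : Ioo (0:ℝ) s ⊆ Ioo 0 1 := Ioo_subset_Ioo le_rfl hs1.le
  have hrrgint := rr_integrableOn hg
  have hmaxint : IntegrableOn (fun t => max (rr g t - c) 0) (Ioo (0:ℝ) 1) :=
    (hrrgint.sub (const_integrableOn measurableSet_Ioo (volume_Ioo_ne_top 0 1) c)).pos_part
  have key2 : (∫ t in Ioo (0:ℝ) s, rr g t)
      ≤ (∫ t in Ioo (0:ℝ) 1, max (rr g t - c) 0) + c * s := by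
    have e1 : ∫ t in Ioo (0:ℝ) s, rr g t
        = (∫ t in Ioo (0:ℝ) s, (rr g t - c)) + c * s := by
      rw [integral_sub (hrrgint.mono_set hIoosub)
        (const_integrableOn measurableSet_Ioo (volume_Ioo_ne_top 0 s) c)]
      rw [setIntegral_const, smul_eq_mul, Real.volume_real_Ioo_of_le hs0, sub_zero,
        mul_comm]
      ring
    rw [e1]
    have e2 : (∫ t in Ioo (0:ℝ) s, (rr g t - c)) ≤ ∫ t in Ioo (0:ℝ) s, max (rr g t - c) 0 :=
      setIntegral_mono ((hrrgint.mono_set hIoosub).sub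
          (const_integrableOn measurableSet_Ioo (volume_Ioo_ne_top 0 s) c))
        (hmaxint.mono_set hIoosub) (fun t => le_max_left _ _)
    have e3 : (∫ t in Ioo (0:ℝ) s, max (rr g t - c) 0)
        ≤ ∫ t in Ioo (0:ℝ) 1, max (rr g t - c) 0 :=
      setIntegral_mono_set hmaxint
        (Filter.Eventually.of_forall fun t => le_max_right _ _) hIoosub.eventuallyLE
    linarith
  have key3 : (∫ t in Ioo (0:ℝ) 1, max (rr g t - c) 0)
      ≤ ∫ t in Ioo (0:ℝ) 1, max (rr f t - c) 0 := by
    rw [pos_part_integral_eq hg c, pos_part_integral_eq hf c]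
    exact hc c
  have key1 := rr_setIntegral_eq hf hsI
  calc (∫ t in Ioo (0:ℝ) s, rr g t)
      ≤ (∫ t in Ioo (0:ℝ) 1, max (rr g t - c) 0) + c * s := key2
    _ ≤ (∫ t in Ioo (0:ℝ) 1, max (rr f t - c) 0) + c * s := by linarith
    _ = ∫ t in Ioo (0:ℝ) s, rr f t := by rw [key1]; ring

/-- The rearrangement preserves the total integral. -/
lemma rr_total_integral {g : ℝ → ℝ} (hg : IntegrableOn g (Ioo (0:ℝ) 1)) :
    (∫ t in Ioo (0:ℝ) 1, rr g t) = ∫ u in Ioo (0:ℝ) 1, g u := by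
  have hmax : ∀ (a b : ℝ), max a b = max (a - b) 0 + b := by
    intro a b
    rcases le_total a b with h | h
    · rw [max_eq_right h, max_eq_right (sub_nonpos.2 h), zero_add]
    · rw [max_eq_left h, max_eq_left (sub_nonneg.2 h)]; ring
  have hconst : ∀ C : ℝ, ∫ _ in Ioo (0:ℝ) 1, C = C := by
    intro C
    rw [setIntegral_const, smul_eq_mul, Real.volume_real_Ioo_of_le zero_le_one, sub_zero,
      one_mul]
  have hgen : ∀ (h : ℝ → ℝ), IntegrableOn h (Ioo (0:ℝ) 1) → ∀ n : ℕ,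
      ∫ t in Ioo (0:ℝ) 1, max (h t) (-(n:ℝ))
        = (∫ t in Ioo (0:ℝ) 1, max (h t - (-(n:ℝ))) 0) + (-(n:ℝ)) := by
    intro h hh n
    have : ∀ t : ℝ, max (h t) (-(n:ℝ)) = max (h t - (-(n:ℝ))) 0 + (-(n:ℝ)) :=
      fun t => hmax (h t) (-(n:ℝ))
    have hInt1 : IntegrableOn (fun t => max (h t - (-(n:ℝ))) 0) (Ioo (0:ℝ) 1) :=
      (hh.sub (const_integrableOn measurableSet_Ioo (volume_Ioo_ne_top 0 1) _)).pos_part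
    rw [integral_congr_ae (Filter.Eventually.of_forall this),
      integral_add hInt1 (const_integrableOn measurableSet_Ioo (volume_Ioo_ne_top 0 1) _), hconst]
  have key : ∀ n : ℕ, ∫ t in Ioo (0:ℝ) 1, max (rr g t) (-(n:ℝ))
      = ∫ u in Ioo (0:ℝ) 1, max (g u) (-(n:ℝ)) := by
    intro n
    rw [hgen (rr g) (rr_integrableOn hg) n, hgen g hg n, pos_part_integral_eq hg]
  -- dominated convergence, twice
  have hDCT : ∀ (h : ℝ → ℝ), IntegrableOn h (Ioo (0:ℝ) 1) →
      Filter.Tendsto (fun n : ℕ => ∫ t in Ioo (0:ℝ) 1, max (h t) (-(n:ℝ)))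
        Filter.atTop (nhds (∫ t in Ioo (0:ℝ) 1, h t)) := by
    intro h hh
    apply tendsto_integral_of_dominated_convergence (fun t => |h t|)
    · intro n
      exact (hh.aemeasurable.max aemeasurable_const).aestronglyMeasurable
    · exact hh.abs
    · intro n
      refine Filter.Eventually.of_forall fun t => ?_
      rw [Real.norm_eq_abs]
      have hn0 : (0:ℝ) ≤ (n:ℝ) := Nat.cast_nonneg n
      rcases le_total (h t) (-(n:ℝ)) with hcase | hcase
      · rw [max_eq_right hcase, abs_of_nonpos (neg_nonpos.2 hn0),
          abs_of_nonpos (hcase.trans (neg_nonpos.2 hn0))]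
        linarith
      · rw [max_eq_left hcase]
    · refine Filter.Eventually.of_forall fun t => ?_
      apply tendsto_atTop_of_eventually_const (i₀ := Nat.ceil (-(h t)))
      intro n hn
      have : -(h t) ≤ (n:ℝ) := le_trans (Nat.le_ceil _) (Nat.cast_le.2 hn)
      rw [max_eq_left (by linarith)]
  have lim1 := hDCT (rr g) (rr_integrableOn hg)
  have lim2 := (hDCT g hg).congr fun n => (key n).symm
  exact tendsto_nhds_unique lim1 lim2

section Operator

variable {ι : Type*} [Countable ι] {A : ι → Set ℝ}

lemma tsum_indicator_piece (hdisj : Pairwise (Function.onFun Disjoint A)) (c : ι → ℝ)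
    {j : ι} {u : ℝ} (hu : u ∈ A j) :
    ∑' k, Set.indicator (A k) (fun _ => c k) u = c j := by
  rw [tsum_eq_single j (fun k hk => ?_)]
  · exact indicator_of_mem hu _
  · exact indicator_of_notMem (fun hu' => disjoint_left.1 (hdisj hk) hu' hu) _

lemma tsum_indicator_off (c : ι → ℝ) {u : ℝ} (hu : ∀ k, u ∉ A k) :
    ∑' k, Set.indicator (A k) (fun _ => c k) u = 0 := by
  have : ∀ k, Set.indicator (A k) (fun _ => c k) u = 0 :=
    fun k => indicator_of_notMem (hu k) _
  rw [tsum_congr this, tsum_zero]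

lemma tsum_indicator_measurable (hmeas : ∀ k, MeasurableSet (A k))
    (hdisj : Pairwise (Function.onFun Disjoint A)) (c : ι → ℝ) :
    Measurable (fun u => ∑' k, Set.indicator (A k) (fun _ => c k) u) := by
  classical
  set p : ℝ → ℝ≥0∞ := fun u => ∑' k, Set.indicator (A k) (fun _ => ENNReal.ofReal (c k)) u with hp
  set q : ℝ → ℝ≥0∞ := fun u => ∑' k, Set.indicator (A k) (fun _ => ENNReal.ofReal (-c k)) u with hq
  have hpm : Measurable p := Measurable.ennreal_tsum fun k => measurable_const.indicator (hmeas k)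
  have hqm : Measurable q := Measurable.ennreal_tsum fun k => measurable_const.indicator (hmeas k)
  have heq : (fun u => ∑' k, Set.indicator (A k) (fun _ => c k) u)
      = fun u => (p u).toReal - (q u).toReal := by
    funext u
    by_cases hu : ∃ j, u ∈ A j
    · obtain ⟨j, hj⟩ := hu
      have hpu : p u = ENNReal.ofReal (c j) := by
        show (∑' k, Set.indicator (A k) (fun _ => ENNReal.ofReal (c k)) u) = _
        rw [tsum_eq_single j (fun k hk =>
          indicator_of_notMem (fun hu' => disjoint_left.1 (hdisj hk) hu' hj) _)]
        exact indicator_of_mem hj _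
      have hqu : q u = ENNReal.ofReal (-c j) := by
        show (∑' k, Set.indicator (A k) (fun _ => ENNReal.ofReal (-c k)) u) = _
        rw [tsum_eq_single j (fun k hk =>
          indicator_of_notMem (fun hu' => disjoint_left.1 (hdisj hk) hu' hj) _)]
        exact indicator_of_mem hj _
      rw [tsum_indicator_piece hdisj c hj, hpu, hqu]
      rcases le_total 0 (c j) with h | h
      · rw [ENNReal.toReal_ofReal h, ENNReal.ofReal_of_nonpos (neg_nonpos.2 h)]
        simp
      · rw [ENNReal.ofReal_of_nonpos h, ENNReal.toReal_ofReal (neg_nonneg.2 h)]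
        simp
    · push_neg at hu
      have hpu : p u = 0 := by
        show (∑' k, Set.indicator (A k) (fun _ => ENNReal.ofReal (c k)) u) = 0
        have : ∀ k, Set.indicator (A k) (fun _ => ENNReal.ofReal (c k)) u = 0 :=
          fun k => indicator_of_notMem (hu k) _
        rw [tsum_congr this, tsum_zero]
      have hqu : q u = 0 := by
        show (∑' k, Set.indicator (A k) (fun _ => ENNReal.ofReal (-c k)) u) = 0
        have : ∀ k, Set.indicator (A k) (fun _ => ENNReal.ofReal (-c k)) u = 0 :=
          fun k => indicator_of_notMem (hu k) _
        rw [tsum_congr this, tsum_zero]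
      rw [tsum_indicator_off c hu, hpu, hqu]
      simp
  rw [heq]
  exact hpm.ennreal_toReal.sub hqm.ennreal_toReal

end Operator


theorem partialAvg_majorised {ι : Type*} [Countable ι] (A : ι → Set ℝ)
    (hmeas : ∀ k, MeasurableSet (A k)) (hsub : ∀ k, A k ⊆ Ioo (0:ℝ) 1)
    (hdisj : Pairwise (Function.onFun Disjoint A))
    (hpos : ∀ k, 0 < volume (A k))
    (x : ℝ → ℝ) (hx : IntegrableOn x (Ioo (0:ℝ) 1)) :
    Maj (partialAvg A x) x := by
  classical
  set T : Set ℝ := ⋃ k, A k with hT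
  have hTmeas : MeasurableSet T := MeasurableSet.iUnion hmeas
  have hTsub : T ⊆ Ioo (0:ℝ) 1 := iUnion_subset hsub
  set B : Set ℝ := Ioo (0:ℝ) 1 \ T with hB
  have hBmeas : MeasurableSet B := measurableSet_Ioo.diff hTmeas
  have hBsub : B ⊆ Ioo (0:ℝ) 1 := diff_subset
  have hTB : T ∪ B = Ioo (0:ℝ) 1 := union_diff_cancel hTsub
  have hmfin : ∀ k, volume (A k) ≠ ⊤ := fun k =>
    ne_top_of_le_ne_top (volume_Ioo_ne_top 0 1) (measure_mono (hsub k))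
  set c : ι → ℝ := fun k => (∫ v in A k, x v) / (volume (A k)).toReal with hc
  have hmr : ∀ k, 0 < (volume (A k)).toReal := fun k => ENNReal.toReal_pos (hpos k).ne' (hmfin k)
  set P : ℝ → ℝ := partialAvg A x with hP
  have hPdef : ∀ u, P u = (∑' k, Set.indicator (A k) (fun _ => c k) u)
      + Set.indicator B x u := fun u => rfl
  have hPj : ∀ j, ∀ u ∈ A j, P u = c j := by
    intro j u hu
    rw [hPdef, tsum_indicator_piece hdisj c hu,
      indicator_of_notMem (fun h => h.2 (mem_iUnion.2 ⟨j, hu⟩)) _, add_zero]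
  have hPB : ∀ u ∈ B, P u = x u := by
    intro u hu
    have hnot : ∀ k, u ∉ A k := fun k hk => hu.2 (mem_iUnion.2 ⟨k, hk⟩)
    rw [hPdef, tsum_indicator_off c hnot, indicator_of_mem hu, zero_add]
  have hxk : ∀ k, IntegrableOn x (A k) := fun k => hx.mono_set (hsub k)
  have hxT : IntegrableOn x T := hx.mono_set hTsub
  have hxB : IntegrableOn x B := hx.mono_set hBsub
  have hckm : ∀ k, c k * (volume (A k)).toReal = ∫ v in A k, x v := fun k =>
    div_mul_cancel₀ _ (hmr k).ne'
  have hf0meas : Measurable (fun u => ∑' k, Set.indicator (A k) (fun _ => c k) u) :=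
    tsum_indicator_measurable hmeas hdisj c
  -- Integrability on T
  have hf0T : IntegrableOn (fun u => ∑' k, Set.indicator (A k) (fun _ => c k) u) T := by
    refine ⟨hf0meas.aestronglyMeasurable.restrict, ?_⟩
    rw [HasFiniteIntegral]
    have h1 : ∫⁻ u in T, ‖∑' k, Set.indicator (A k) (fun _ => c k) u‖₊
        = ∑' k, ∫⁻ u in A k, ‖∑' k', Set.indicator (A k') (fun _ => c k') u‖₊ := by
      rw [hT]; exact lintegral_iUnion hmeas hdisj _
    have h2 : ∀ k, (∫⁻ u in A k, ‖∑' k', Set.indicator (A k') (fun _ => c k') u‖₊)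
        = (‖c k‖₊ : ℝ≥0∞) * volume (A k) := by
      intro k
      rw [setLIntegral_congr_fun (hmeas k)
        (fun u hu => by rw [tsum_indicator_piece hdisj c hu])]
      exact setLIntegral_const _ _
    have h3 : ∀ k, (‖c k‖₊ : ℝ≥0∞) * volume (A k) ≤ ∫⁻ u in A k, ‖x u‖₊ := by
      intro k
      have e1 : (‖c k‖₊ : ℝ≥0∞) * volume (A k)
          = ENNReal.ofReal (|c k| * (volume (A k)).toReal) := by
        rw [ENNReal.ofReal_mul (abs_nonneg _), ← Real.enorm_eq_ofReal_abs,
          ENNReal.ofReal_toReal (hmfin k), enorm_eq_nnnorm]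
      have e2 : |c k| * (volume (A k)).toReal = |∫ v in A k, x v| := by
        rw [hc, abs_div, abs_of_pos (hmr k), div_mul_cancel₀ _ (hmr k).ne']
      rw [e1, e2, show (∫⁻ u in A k, (‖x u‖₊ : ℝ≥0∞)) = ∫⁻ u in A k, ‖x u‖ₑ from rfl,
          ← ofReal_integral_norm_eq_lintegral_enorm (hxk k)]
      apply ENNReal.ofReal_le_ofReal
      simpa [Real.norm_eq_abs] using norm_integral_le_integral_norm (μ := volume.restrict (A k)) x
    calc ∫⁻ u in T, ‖∑' k, Set.indicator (A k) (fun _ => c k) u‖₊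
        = ∑' k, ∫⁻ u in A k, ‖∑' k', Set.indicator (A k') (fun _ => c k') u‖₊ := h1
      _ ≤ ∑' k, ∫⁻ u in A k, ‖x u‖₊ := ENNReal.tsum_le_tsum (fun k => (h2 k) ▸ h3 k)
      _ = ∫⁻ u in T, ‖x u‖₊ := by rw [hT]; exact (lintegral_iUnion hmeas hdisj _).symm
      _ < ⊤ := hxT.2
  have hPT : IntegrableOn P T := by
    refine hf0T.congr_fun (fun u hu => ?_) hTmeas
    obtain ⟨j, hj⟩ := mem_iUnion.1 hu
    rw [hPj j u hj]; exact tsum_indicator_piece hdisj c hj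
  have hPB' : IntegrableOn P B := hxB.congr_fun (fun u hu => (hPB u hu).symm) hBmeas
  have hPI : IntegrableOn P (Ioo (0:ℝ) 1) := by
    have := hPT.union hPB'
    rwa [hTB] at this
  -- splitting of integrals
  have hsplit : ∀ F : ℝ → ℝ, IntegrableOn F (Ioo (0:ℝ) 1) →
      (∫ u in Ioo (0:ℝ) 1, F u) = (∫ u in T, F u) + ∫ u in B, F u := by
    intro F hF
    rw [← hTB, setIntegral_union disjoint_sdiff_right hBmeas
      (hF.mono_set hTsub) (hF.mono_set hBsub)]
  -- equality of total integrals
  have hint_eq : (∫ u in Ioo (0:ℝ) 1, P u) = ∫ u in Ioo (0:ℝ) 1, x u := by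
    rw [hsplit P hPI, hsplit x hx]
    congr 1
    · rw [hT, integral_iUnion hmeas hdisj (hT ▸ hPT), integral_iUnion hmeas hdisj (hT ▸ hxT)]
      refine tsum_congr fun k => ?_
      rw [setIntegral_congr_fun (hmeas k) (g := fun _ => c k) (fun u hu => hPj k u hu),
        setIntegral_const, smul_eq_mul, measureReal_def, mul_comm, hckm k]
    · exact setIntegral_congr_fun hBmeas (fun u hu => hPB u hu)
  -- Jensen-type inequality for positive parts
  have hpos_le : ∀ c0 : ℝ, (∫ u in Ioo (0:ℝ) 1, max (P u - c0) 0)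
      ≤ ∫ u in Ioo (0:ℝ) 1, max (x u - c0) 0 := by
    intro c0
    have hφP : IntegrableOn (fun u => max (P u - c0) 0) (Ioo (0:ℝ) 1) :=
      (hPI.sub (const_integrableOn measurableSet_Ioo (volume_Ioo_ne_top 0 1) c0)).pos_part
    have hφx : IntegrableOn (fun u => max (x u - c0) 0) (Ioo (0:ℝ) 1) :=
      (hx.sub (const_integrableOn measurableSet_Ioo (volume_Ioo_ne_top 0 1) c0)).pos_part
    rw [hsplit _ hφP, hsplit _ hφx]
    have hBeq : (∫ u in B, max (P u - c0) 0) = ∫ u in B, max (x u - c0) 0 :=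
      setIntegral_congr_fun hBmeas (fun u hu => by rw [hPB u hu])
    have hTle : (∫ u in T, max (P u - c0) 0) ≤ ∫ u in T, max (x u - c0) 0 := by
      have h1 : HasSum (fun k => ∫ u in A k, max (P u - c0) 0)
          (∫ u in T, max (P u - c0) 0) := by
        rw [hT]; exact hasSum_integral_iUnion hmeas hdisj (hT ▸ hφP.mono_set hTsub)
      have h2 : HasSum (fun k => ∫ u in A k, max (x u - c0) 0)
          (∫ u in T, max (x u - c0) 0) := by
        rw [hT]; exact hasSum_integral_iUnion hmeas hdisj (hT ▸ hφx.mono_set hTsub)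
      refine hasSum_le (fun k => ?_) h1 h2
      have hconstk : IntegrableOn (fun _ : ℝ => c0) (A k) :=
        const_integrableOn (hmeas k) (hmfin k) c0
      have e1 : (∫ u in A k, max (P u - c0) 0)
          = (volume (A k)).toReal * max (c k - c0) 0 := by
        rw [setIntegral_congr_fun (hmeas k) (g := fun _ => max (c k - c0) 0)
          (fun u hu => by rw [hPj k u hu]), setIntegral_const, smul_eq_mul, measureReal_def]
      have e2 : (volume (A k)).toReal * max (c k - c0) 0
          = max ((volume (A k)).toReal * (c k - c0)) 0 := by
        rw [mul_max_of_nonneg _ _ (hmr k).le, mul_zero]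
      have e3 : (volume (A k)).toReal * (c k - c0) = ∫ u in A k, (x u - c0) := by
        rw [integral_sub (hxk k) hconstk, setIntegral_const, measureReal_def, smul_eq_mul, mul_sub,
          mul_comm, hckm k, mul_comm]
      have e4 : max (∫ u in A k, (x u - c0)) 0 ≤ ∫ u in A k, max (x u - c0) 0 := by
        refine max_le ?_ ?_
        · exact integral_mono ((hxk k).sub hconstk) ((hxk k).sub hconstk).pos_part
            (fun u => le_max_left _ _)
        · exact setIntegral_nonneg (hmeas k) (fun u _ => le_max_right _ _)
      rw [e1, e2, e3]
      exact e4
    linarith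
  constructor
  · exact rr_int_le hPI hx hpos_le
  · rw [rr_total_integral hPI, rr_total_integral hx]
    exact hint_eq
end
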